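/- arXiv:cs/0610144 — 4 statements merged into one kernel-verified Lean document; each statement's English description precedes it below -/
import Mathlib

section
/- Suppose R = log m > H(p). Then there exists a constant K > 0 such that for every n ≥ 1 and every integer Δ with 0 ≤ Δ ≤ n−1, the probability that there exists a string x̃ ∈ X^n lying in the same bin as the source string x^n, satisfying p(x̃) ≥ p(x^n), and differing from x^n in at least one of the first n−Δ positions, is at most K·exp(−Δ·E_ML(R)). -/
open Classical
open scoped BigOperators

noncomputable section

/-- `q` is a probability mass function on `Z`. -/
def IsPMF {Z : Type*} [Fintype Z] (q : Z → ℝ) : Prop :=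
  (∀ z, 0 ≤ q z) ∧ ∑ z, q z = 1

/-- The probability of the event `A` on a finite outcome space with weights `P`. -/
def prob {Ω : Type*} [Fintype Ω] (P : Ω → ℝ) (A : Ω → Prop) : ℝ :=
  ∑ ω, if A ω then P ω else 0

/-- A causal random binning scheme of length `n` with `m` bins: the `j`-th bin index of a
string is a function of its length-`(j+1)` prefix. -/
abbrev BinScheme (X : Type*) (n m : ℕ) : Type _ :=
  (j : Fin n) → (Fin (j.val + 1) → X) → Fin m

/-- The length-`(j+1)` prefix of a string of length `n`. -/
def pref {X : Type*} {n : ℕ} (w : Fin n → X) (j : Fin n) : Fin (j.val + 1) → X :=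
  fun i => w ⟨i.val, lt_of_le_of_lt (Nat.lt_succ_iff.mp i.isLt) j.isLt⟩

/-- Two strings lie in the same bin iff all their bin indices agree. -/
def sameBin {X : Type*} {n m : ℕ} (b : BinScheme X n m) (w x : Fin n → X) : Prop :=
  ∀ j : Fin n, b j (pref w j) = b j (pref x j)

/-- Shannon entropy in nats. -/
def entropy {Z : Type*} [Fintype Z] (q : Z → ℝ) : ℝ :=
  - ∑ z, q z * Real.log (q z)

/-- `E_ML(R) = sup_{ρ ∈ [0,1]} [ρR − (1+ρ) log Σ_x p(x)^{1/(1+ρ)}]`. -/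
def EML {X : Type*} [Fintype X] (p : X → ℝ) (R : ℝ) : ℝ :=
  sSup ((fun ρ : ℝ => ρ * R - (1 + ρ) * Real.log (∑ x, p x ^ (1 / (1 + ρ)))) ''
    Set.Icc 0 1)

namespace Aux

lemma sum_pi_prod {n : ℕ} {κ : Fin n → Type*} [∀ j, Fintype (κ j)] (h : ∀ j, κ j → ℝ) :
    ∑ b : (∀ j, κ j), ∏ j, h j (b j) = ∏ j, ∑ y, h j y :=
  (Fintype.prod_sum h).symm


lemma sum_agree {X : Type*} [Fintype X] [DecidableEq X] {n : ℕ} (q : X → ℝ) (x : Fin n → X) (i : ℕ) :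
    ∑ x' : Fin n → X, (if (∀ j : Fin n, j.val < i → x' j = x j) then ∏ j, q (x' j) else 0)
      = ∏ j : Fin n, (if j.val < i then q (x j) else ∑ a, q a) := by
  have step : ∀ x' : Fin n → X,
      (if (∀ j : Fin n, j.val < i → x' j = x j) then ∏ j, q (x' j) else 0)
        = ∏ j : Fin n, (if j.val < i then (if x' j = x j then q (x' j) else 0) else q (x' j)) := by
    intro x'
    by_cases hc : ∀ j : Fin n, j.val < i → x' j = x j
    · rw [if_pos hc]
      refine Finset.prod_congr rfl fun j _ => ?_
      by_cases hj : j.val < i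
      · rw [if_pos hj, if_pos (hc j hj)]
      · rw [if_neg hj]
    · rw [if_neg hc]
      push_neg at hc
      obtain ⟨j, hj, hne⟩ := hc
      exact (Finset.prod_eq_zero (Finset.mem_univ j) (by rw [if_pos hj, if_neg hne])).symm
  rw [Finset.sum_congr rfl fun x' _ => step x',
    sum_pi_prod (fun j a => if j.val < i then (if a = x j then q a else 0) else q a)]
  refine Finset.prod_congr rfl fun j _ => ?_
  by_cases hj : j.val < i
  · simp only [if_pos hj, Finset.sum_ite_eq' Finset.univ (x j) q, Finset.mem_univ, if_pos]
  · simp only [if_neg hj]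

lemma count_pair {A : Type*} [Fintype A] [DecidableEq A] {m : ℕ} (hm : 1 ≤ m) {u v : A}
    (huv : u ≠ v) :
    (∑ f : A → Fin m, if f u = f v then (1:ℝ) else 0) = (Fintype.card (A → Fin m) : ℝ) / m := by
  haveI : NeZero m := ⟨by omega⟩
  let F : {f : A → Fin m // f u = f v} × Fin m → (A → Fin m) :=
    fun fk a => if a = v then fk.1.1 a + fk.2 else fk.1.1 a
  let G : (A → Fin m) → {f : A → Fin m // f u = f v} × Fin m :=
    fun g => (⟨fun a => if a = v then g u else g a, by simp [if_neg huv]⟩, g v - g u)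
  have e : {f : A → Fin m // f u = f v} × Fin m ≃ (A → Fin m) :=
    { toFun := F
      invFun := G
      left_inv := by
        rintro ⟨⟨f, hf⟩, k⟩
        have hFu : F (⟨f, hf⟩, k) u = f u := if_neg huv
        have hFv : F (⟨f, hf⟩, k) v = f v + k := if_pos rfl
        refine Prod.ext (Subtype.ext (funext fun a => ?_)) ?_
        · show (if a = v then F (⟨f, hf⟩, k) u else F (⟨f, hf⟩, k) a) = f a
          by_cases ha : a = v
          · rw [if_pos ha, hFu, hf, ha]
          · rw [if_neg ha]; show (if a = v then f a + k else f a) = f a; rw [if_neg ha]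
        · show F (⟨f, hf⟩, k) v - F (⟨f, hf⟩, k) u = k
          rw [hFu, hFv, hf]
          abel
      right_inv := by
        intro g
        funext a
        show (if a = v then (if a = v then g u else g a) + (g v - g u)
              else (if a = v then g u else g a)) = g a
        by_cases ha : a = v
        · rw [if_pos ha, if_pos ha, ha]; abel
        · rw [if_neg ha, if_neg ha] }
  have hcard : Fintype.card {f : A → Fin m // f u = f v} * m = Fintype.card (A → Fin m) := by
    have := Fintype.card_congr e
    simpa [Fintype.card_prod] using this
  have hsum : (∑ f : A → Fin m, if f u = f v then (1:ℝ) else 0)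
      = (Fintype.card {f : A → Fin m // f u = f v} : ℝ) := by
    rw [Fintype.card_subtype]
    simp [Finset.sum_boole]
  rw [hsum, eq_div_iff (by positivity : (m:ℝ) ≠ 0)]
  exact_mod_cast hcard

lemma collision {X : Type*} [Fintype X] [DecidableEq X] {n m : ℕ} (hm : 1 ≤ m)
    (x x' : Fin n → X) (i : Fin n) (hne : x' i ≠ x i) :
    ∑ b : BinScheme X n m, (if sameBin b x' x then (1:ℝ) else 0)
      ≤ (Fintype.card (BinScheme X n m) : ℝ) * ((m:ℝ)⁻¹) ^ (n - i.val) := by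
  have hm1 : (1:ℝ) ≤ (m:ℝ) := by exact_mod_cast hm
  have step : ∀ b : BinScheme X n m, (if sameBin b x' x then (1:ℝ) else 0)
      = ∏ j : Fin n, (if b j (pref x' j) = b j (pref x j) then (1:ℝ) else 0) := by
    intro b
    by_cases hb : sameBin b x' x
    · rw [if_pos hb]
      exact (Finset.prod_eq_one fun j _ => if_pos (hb j)).symm
    · rw [if_neg hb]
      obtain ⟨j, hj⟩ := not_forall.mp hb
      exact (Finset.prod_eq_zero (Finset.mem_univ j) (show (if b j (pref x' j) = b j (pref x j) then (1:ℝ) else 0) = 0 from if_neg hj)).symm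
  rw [Finset.sum_congr rfl fun b _ => step b,
    sum_pi_prod (fun j (f : (Fin (j.val+1) → X) → Fin m) =>
      if f (pref x' j) = f (pref x j) then (1:ℝ) else 0)]
  set w : Fin n → ℝ := fun j => if pref x' j = pref x j then 1 else (m:ℝ)⁻¹ with hw
  have hcount : ∀ j : Fin n, (∑ f : (Fin (j.val+1) → X) → Fin m,
      if f (pref x' j) = f (pref x j) then (1:ℝ) else 0)
      = (Fintype.card ((Fin (j.val+1) → X) → Fin m) : ℝ) * w j := by
    intro j
    by_cases hp : pref x' j = pref x j
    · simp only [hw, if_pos hp, mul_one, hp]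
      simp
    · rw [count_pair hm hp, hw]
      simp only [if_neg hp]
      ring
  rw [Finset.prod_congr rfl fun j _ => hcount j, Finset.prod_mul_distrib]
  have hcardB : ∏ j : Fin n, (Fintype.card ((Fin (j.val+1) → X) → Fin m) : ℝ)
      = (Fintype.card (BinScheme X n m) : ℝ) := by
    rw [Fintype.card_pi, Nat.cast_prod]
  rw [hcardB]
  refine mul_le_mul_of_nonneg_left ?_ (by positivity)
  -- now ∏ w ≤ (m⁻¹)^(n - i)
  have hw0 : ∀ j, 0 ≤ w j := by
    intro j; rw [hw]; dsimp only
    split <;> positivity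
  have hw1 : ∀ j, w j ≤ 1 := by
    intro j; rw [hw]; dsimp only
    split
    · exact le_refl 1
    · exact inv_le_one_of_one_le₀ hm1
  have hdiff : ∀ j : Fin n, i ≤ j → w j = (m:ℝ)⁻¹ := by
    intro j hij
    have hpne : pref x' j ≠ pref x j := by
      intro hpe
      have hiv : i.val < j.val + 1 := Nat.lt_succ_of_le hij
      have := congrFun hpe ⟨i.val, hiv⟩
      simp only [pref] at this
      exact hne (by simpa [Fin.eta] using this)
    rw [hw]; exact if_neg hpne
  rw [← Finset.prod_filter_mul_prod_filter_not Finset.univ (fun j => i ≤ j) w]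
  have hfc : (Finset.univ.filter fun j : Fin n => i ≤ j) = Finset.Ici i := by
    ext j; simp [Finset.mem_Ici]
  have h1 : ∏ j ∈ Finset.univ.filter (fun j : Fin n => i ≤ j), w j = ((m:ℝ)⁻¹) ^ (n - i.val) := by
    rw [Finset.prod_congr rfl fun j hj => hdiff j (Finset.mem_filter.mp hj).2,
      Finset.prod_const, hfc, Fin.card_Ici]
  have h2 : ∏ j ∈ Finset.univ.filter (fun j : Fin n => ¬ i ≤ j), w j ≤ 1 :=
    Finset.prod_le_one (fun j _ => hw0 j) (fun j _ => hw1 j)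
  calc (∏ j ∈ Finset.univ.filter (fun j : Fin n => i ≤ j), w j)
        * ∏ j ∈ Finset.univ.filter (fun j : Fin n => ¬ i ≤ j), w j
      ≤ (∏ j ∈ Finset.univ.filter (fun j : Fin n => i ≤ j), w j) * 1 := by
        refine mul_le_mul_of_nonneg_left h2 (Finset.prod_nonneg fun j _ => hw0 j)
    _ = ((m:ℝ)⁻¹) ^ (n - i.val) := by rw [mul_one, h1]

lemma min_one_le_rpow {a ρ : ℝ} (ha : 0 ≤ a) (h0 : 0 ≤ ρ) (h1 : ρ ≤ 1) : min 1 a ≤ a ^ ρ := by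
  rcases le_or_gt 1 a with h | h
  · exact (min_le_left _ _).trans (Real.one_le_rpow h h0)
  · rcases eq_or_lt_of_le ha with h0a | h0a
    · rw [min_eq_right h.le, ← h0a]
      exact Real.rpow_nonneg le_rfl ρ
    · rw [min_eq_right h.le]
      calc a = a ^ (1:ℝ) := (Real.rpow_one a).symm
        _ ≤ a ^ ρ := Real.rpow_le_rpow_of_exponent_ge h0a h.le h1

lemma pow_swap_rpow {x : ℝ} (hx : 0 ≤ x) (k : ℕ) (ρ : ℝ) : (x ^ k) ^ ρ = (x ^ ρ) ^ k := by
  rw [← Real.rpow_natCast x k, ← Real.rpow_mul hx, mul_comm, Real.rpow_mul hx,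
    Real.rpow_natCast]

lemma gallager {X : Type*} [Fintype X] [DecidableEq X] (p : X → ℝ)
    (hp0 : ∀ a, 0 ≤ p a) (hp1 : ∑ a, p a = 1) {m : ℕ} (hm : 1 ≤ m)
    (ρ : ℝ) (hρ0 : 0 ≤ ρ) (hρ1 : ρ ≤ 1) {n i : ℕ} (hin : i < n) :
    ∑ x : Fin n → X, (∏ j, p (x j)) *
      min 1 (((m:ℝ)⁻¹) ^ (n - i) *
        ∑ x' : Fin n → X, (if ((∀ j : Fin n, j.val < i → x' j = x j) ∧
            (∏ j, p (x j)) ≤ ∏ j, p (x' j)) then (1:ℝ) else 0))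
      ≤ (((m:ℝ)⁻¹) ^ ρ * ((∑ a, p a ^ (1/(1+ρ))) ^ ρ * ∑ a, p a ^ (1/(1+ρ)))) ^ (n - i) := by
  have hm0 : (0:ℝ) < m := by exact_mod_cast Nat.lt_of_lt_of_le Nat.zero_lt_one hm
  set s : ℝ := 1/(1+ρ) with hsdef
  have h1ρ : (0:ℝ) < 1 + ρ := by linarith
  have hs0 : 0 < s := by rw [hsdef]; positivity
  have hssum : s + s * ρ = 1 := by rw [hsdef]; field_simp
  set g : ℝ := ∑ a, p a ^ s with hgdef
  have hg0 : 0 ≤ g := Finset.sum_nonneg fun a _ => Real.rpow_nonneg (hp0 a) s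
  set A : ℝ := (((m:ℝ)⁻¹) ^ ρ) ^ (n - i) with hAdef
  have hA0 : 0 ≤ A := by rw [hAdef]; positivity
  set h : Fin n → X → ℝ := fun j a => if j.val < i then p a else (g ^ ρ) * p a ^ s with hhdef
  have hh0 : ∀ j a, 0 ≤ h j a := by
    intro j a
    rw [hhdef]; dsimp only
    split
    · exact hp0 a
    · exact mul_nonneg (Real.rpow_nonneg hg0 ρ) (Real.rpow_nonneg (hp0 a) s)
  have key : ∀ x : Fin n → X, (∏ j, p (x j)) *
      min 1 (((m:ℝ)⁻¹) ^ (n - i) *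
        ∑ x' : Fin n → X, (if ((∀ j : Fin n, j.val < i → x' j = x j) ∧
            (∏ j, p (x j)) ≤ ∏ j, p (x' j)) then (1:ℝ) else 0))
      ≤ A * ∏ j, h j (x j) := by
    intro x
    have hpx0 : 0 ≤ ∏ j, p (x j) := Finset.prod_nonneg fun j _ => hp0 _
    set N : ℝ := ∑ x' : Fin n → X, (if ((∀ j : Fin n, j.val < i → x' j = x j) ∧
        (∏ j, p (x j)) ≤ ∏ j, p (x' j)) then (1:ℝ) else 0) with hNdef
    have hN0 : 0 ≤ N := Finset.sum_nonneg fun x' _ => by positivity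
    have hmin0 : 0 ≤ min 1 (((m:ℝ)⁻¹) ^ (n - i) * N) := le_min zero_le_one (by positivity)
    by_cases hx : ∏ j, p (x j) = 0
    · rw [hx, zero_mul]
      exact mul_nonneg hA0 (Finset.prod_nonneg fun j _ => hh0 j _)
    have hpos : ∀ j, 0 < p (x j) := fun j =>
      lt_of_le_of_ne (hp0 _) (fun hz => hx (Finset.prod_eq_zero (Finset.mem_univ j) hz.symm))
    have hpxpos : 0 < ∏ j, p (x j) := Finset.prod_pos fun j _ => hpos j
    set P : ℝ := ∏ j, p (x j) ^ s with hPdef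
    have hP : 0 < P := Finset.prod_pos fun j _ => Real.rpow_pos_of_pos (hpos j) s
    set C : ℝ := ∏ j : Fin n, (if j.val < i then p (x j) ^ s else g) with hCdef
    have hC0 : 0 ≤ C := Finset.prod_nonneg fun j _ => by
      split
      · exact Real.rpow_nonneg (hp0 _) s
      · exact hg0
    have hNle : N ≤ P⁻¹ * C := by
      have step : N ≤ P⁻¹ * ∑ x' : Fin n → X,
          (if (∀ j : Fin n, j.val < i → x' j = x j) then ∏ j, p (x' j) ^ s else 0) := by
        rw [hNdef, Finset.mul_sum]
        refine Finset.sum_le_sum fun x' _ => ?_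
        by_cases hc : (∀ j : Fin n, j.val < i → x' j = x j) ∧
            (∏ j, p (x j)) ≤ ∏ j, p (x' j)
        · rw [if_pos hc, if_pos hc.1, le_inv_mul_iff₀ hP, mul_one]
          rw [hPdef, Real.finset_prod_rpow _ _ (fun j _ => hp0 _) s,
            Real.finset_prod_rpow _ _ (fun j _ => hp0 _) s]
          exact Real.rpow_le_rpow hpx0 hc.2 hs0.le
        · rw [if_neg hc]
          have : (0:ℝ) ≤ (if (∀ j : Fin n, j.val < i → x' j = x j)
              then ∏ j, p (x' j) ^ s else 0) := by
            split
            · exact Finset.prod_nonneg fun j _ => Real.rpow_nonneg (hp0 _) s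
            · exact le_rfl
          positivity
      rwa [sum_agree (fun a => p a ^ s) x i, ← hgdef, ← hCdef] at step
    have hchain : min 1 (((m:ℝ)⁻¹) ^ (n - i) * N) ≤ (((m:ℝ)⁻¹) ^ (n - i) * (P⁻¹ * C)) ^ ρ := by
      refine (min_one_le_rpow (by positivity) hρ0 hρ1).trans ?_
      refine Real.rpow_le_rpow (by positivity) ?_ hρ0
      exact mul_le_mul_of_nonneg_left hNle (by positivity)
    have expand : (((m:ℝ)⁻¹) ^ (n - i) * (P⁻¹ * C)) ^ ρ = A * ((P ^ ρ)⁻¹ * C ^ ρ) := by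
      rw [Real.mul_rpow (by positivity) (by positivity),
        Real.mul_rpow (by positivity) hC0, Real.inv_rpow hP.le,
        pow_swap_rpow (by positivity : (0:ℝ) ≤ (m:ℝ)⁻¹) (n - i) ρ, hAdef]
    have hPρ : P ^ ρ = ∏ j, p (x j) ^ (s * ρ) := by
      rw [hPdef, ← Real.finset_prod_rpow _ _ (fun j _ => Real.rpow_nonneg (hp0 _) s) ρ]
      exact Finset.prod_congr rfl fun j _ => (Real.rpow_mul (hp0 _) s ρ).symm
    have hCρ : C ^ ρ = ∏ j : Fin n, (if j.val < i then p (x j) ^ (s * ρ) else g ^ ρ) := by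
      rw [hCdef, ← Real.finset_prod_rpow _ _ (fun j _ => ?_) ρ]
      · refine Finset.prod_congr rfl fun j _ => ?_
        by_cases hj : j.val < i
        · rw [if_pos hj, if_pos hj, ← Real.rpow_mul (hp0 _)]
        · rw [if_neg hj, if_neg hj]
      · split
        · exact Real.rpow_nonneg (hp0 _) s
        · exact hg0
    have hfactor : (∏ j, p (x j)) * ((P ^ ρ)⁻¹ * C ^ ρ) = ∏ j, h j (x j) := by
      rw [hPρ, hCρ, ← Finset.prod_inv_distrib, ← Finset.prod_mul_distrib,
        ← Finset.prod_mul_distrib]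
      refine Finset.prod_congr rfl fun j _ => ?_
      have hpj : 0 < p (x j) := hpos j
      have hne : p (x j) ^ (s * ρ) ≠ 0 := (Real.rpow_pos_of_pos hpj _).ne'
      rw [hhdef]; dsimp only
      by_cases hj : j.val < i
      · rw [if_pos hj, if_pos hj, inv_mul_cancel₀ hne, mul_one]
      · rw [if_neg hj, if_neg hj]
        have e1 : (1:ℝ) + -(s * ρ) = s := by linarith
        have e2 : p (x j) * (p (x j) ^ (s * ρ))⁻¹ = p (x j) ^ s := by
          calc p (x j) * (p (x j) ^ (s * ρ))⁻¹
              = p (x j) ^ (1:ℝ) * p (x j) ^ (-(s * ρ)) := by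
                rw [Real.rpow_one, Real.rpow_neg hpj.le]
            _ = p (x j) ^ ((1:ℝ) + -(s * ρ)) := (Real.rpow_add hpj _ _).symm
            _ = p (x j) ^ s := by rw [e1]
        rw [← mul_assoc, e2, mul_comm]
    calc (∏ j, p (x j)) * min 1 (((m:ℝ)⁻¹) ^ (n - i) * N)
        ≤ (∏ j, p (x j)) * (((m:ℝ)⁻¹) ^ (n - i) * (P⁻¹ * C)) ^ ρ :=
          mul_le_mul_of_nonneg_left hchain hpx0
      _ = A * ((∏ j, p (x j)) * ((P ^ ρ)⁻¹ * C ^ ρ)) := by rw [expand]; ring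
      _ = A * ∏ j, h j (x j) := by rw [hfactor]
  refine (Finset.sum_le_sum fun x _ => key x).trans ?_
  rw [← Finset.mul_sum, sum_pi_prod h]
  have hsum_a : ∀ j : Fin n, (∑ a, h j a) = if j.val < i then 1 else g ^ ρ * g := by
    intro j
    rw [hhdef]; dsimp only
    by_cases hj : j.val < i
    · simp only [if_pos hj, hp1]
    · simp only [if_neg hj, ← Finset.mul_sum, ← hgdef]
  rw [Finset.prod_congr rfl fun j _ => hsum_a j]
  have hprod : (∏ j : Fin n, if j.val < i then (1:ℝ) else g ^ ρ * g)
      = (g ^ ρ * g) ^ (n - i) := by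
    have flip : ∀ j : Fin n, (if j.val < i then (1:ℝ) else g ^ ρ * g)
        = (if ¬ j.val < i then g ^ ρ * g else 1) := fun j => (ite_not _ _ _).symm
    rw [Finset.prod_congr rfl fun j _ => flip j, ← Finset.prod_filter]
    rw [Finset.prod_const]
    congr 1
    have : (Finset.univ.filter fun j : Fin n => ¬ j.val < i) = Finset.Ici (⟨i, hin⟩ : Fin n) := by
      ext j
      simp [Finset.mem_Ici, Fin.le_def, Nat.not_lt]
    rw [this, Fin.card_Ici]
  rw [hprod, hAdef, mul_pow ((m:ℝ)⁻¹ ^ ρ) (g ^ ρ * g), mul_pow]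

lemma eml_max {X : Type*} [Fintype X] [Nonempty X] (p : X → ℝ)
    (hp0 : ∀ a, 0 ≤ p a) (hp1 : ∑ a, p a = 1) (R : ℝ)
    (hRH : -∑ a, p a * Real.log (p a) < R) :
    ∃ ρ : ℝ, ρ ∈ Set.Icc (0:ℝ) 1 ∧
      0 < ρ * R - (1 + ρ) * Real.log (∑ a, p a ^ (1 / (1 + ρ))) ∧
      sSup ((fun ρ : ℝ => ρ * R - (1 + ρ) * Real.log (∑ a, p a ^ (1 / (1 + ρ)))) ''
          Set.Icc 0 1)
        = ρ * R - (1 + ρ) * Real.log (∑ a, p a ^ (1 / (1 + ρ))) := by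
  set f : ℝ → ℝ := fun ρ => ρ * R - (1 + ρ) * Real.log (∑ a, p a ^ (1 / (1 + ρ))) with hfdef
  have hple1 : ∀ a, p a ≤ 1 := by
    intro a
    rw [← hp1]
    exact Finset.single_le_sum (fun a _ => hp0 a) (Finset.mem_univ a)
  have hexa : ∃ a : X, 0 < p a := by
    by_contra hcon
    push_neg at hcon
    have : ∑ a, p a = 0 := Finset.sum_eq_zero fun a _ => le_antisymm (hcon a) (hp0 a)
    rw [hp1] at this; norm_num at this
  have hSpos : ∀ t : ℝ, 0 < t → 0 < ∑ a, p a ^ t := by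
    intro t ht
    obtain ⟨a, ha⟩ := hexa
    calc (0:ℝ) < p a ^ t := Real.rpow_pos_of_pos ha t
      _ ≤ ∑ a, p a ^ t :=
        Finset.single_le_sum (fun b _ => Real.rpow_nonneg (hp0 b) t) (Finset.mem_univ a)
  have hc1 : ContinuousOn (fun ρ : ℝ => 1 / (1 + ρ)) (Set.Icc 0 1) := by
    refine ContinuousOn.div continuousOn_const (by fun_prop) fun ρ hρ => ?_
    have h0 := hρ.1
    intro h
    nlinarith [h, h0]
  have hS : ContinuousOn (fun ρ : ℝ => ∑ a, p a ^ (1 / (1 + ρ))) (Set.Icc 0 1) := by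
    refine continuousOn_finset_sum _ fun a _ => ?_
    rcases eq_or_lt_of_le (hp0 a) with hz | hpa
    · refine ContinuousOn.congr (continuousOn_const (c := (0:ℝ))) fun ρ hρ => ?_
      rw [← hz, Real.zero_rpow]
      have h0 : (0:ℝ) ≤ ρ := hρ.1
      have : (0:ℝ) < 1 + ρ := by linarith
      positivity
    · refine ContinuousOn.congr
        ((Real.continuous_exp.comp_continuousOn
          ((continuousOn_const (c := Real.log (p a))).mul hc1)))
        fun ρ hρ => ?_
      rw [Real.rpow_def_of_pos hpa]
      rfl
  have hf : ContinuousOn f (Set.Icc 0 1) := by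
    refine ContinuousOn.sub (continuousOn_id.mul continuousOn_const) ?_
    refine ContinuousOn.mul (continuousOn_const.add continuousOn_id) ?_
    refine ContinuousOn.log hS fun ρ hρ => ?_
    have h0 : (0:ℝ) ≤ ρ := hρ.1
    have h1 : (0:ℝ) < 1 / (1 + ρ) := by positivity
    exact (hSpos _ h1).ne'
  obtain ⟨ρm, hρm, hmax⟩ :=
    IsCompact.exists_isMaxOn isCompact_Icc (Set.nonempty_Icc.mpr zero_le_one) hf
  have hsup : sSup (f '' Set.Icc 0 1) = f ρm := by
    refine IsGreatest.csSup_eq ⟨Set.mem_image_of_mem f hρm, ?_⟩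
    rintro y ⟨ρ, hρ, rfl⟩
    exact hmax hρ
  clear_value f
  -- positivity at a good ρ₀
  set H : ℝ := -∑ a, p a * Real.log (p a) with hHdef
  clear_value H
  have hH' : H = ∑ a, p a * (-Real.log (p a)) := by
    rw [hHdef, ← Finset.sum_neg_distrib]
    exact Finset.sum_congr rfl fun a _ => by ring
  have hterm0 : ∀ a, 0 ≤ p a * (-Real.log (p a)) := fun a =>
    mul_nonneg (hp0 a) (neg_nonneg.mpr (Real.log_nonpos (hp0 a) (hple1 a)))
  have hH0 : 0 ≤ H := by rw [hH']; exact Finset.sum_nonneg fun a _ => hterm0 a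
  set L : ℝ := ∑ a, |Real.log (p a)| with hLdef
  clear_value L
  have hL0 : 0 ≤ L := by rw [hLdef]; exact Finset.sum_nonneg fun a _ => abs_nonneg _
  have hLa : ∀ a, -Real.log (p a) ≤ L := by
    intro a
    rw [hLdef]
    exact (neg_le_abs _).trans (Finset.single_le_sum
      (f := fun b => |Real.log (p b)|) (fun b _ => abs_nonneg _) (Finset.mem_univ a))
  have hRH' : (0:ℝ) < R - H := sub_pos.mpr hRH
  set ρ₀ : ℝ := min (min 1 (1/(2*(L+1)))) ((R - H)/(2*(L+1)*(H+1))) with hρ₀def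
  clear_value ρ₀
  have hρ₀pos : 0 < ρ₀ := by
    rw [hρ₀def]
    exact lt_min (lt_min one_pos (by positivity)) (div_pos hRH' (by positivity))
  have hρ₀le1 : ρ₀ ≤ 1 := by
    rw [hρ₀def]; exact (min_le_left _ _).trans (min_le_left _ _)
  have hρ₀a : ρ₀ ≤ 1/(2*(L+1)) := by
    rw [hρ₀def]; exact (min_le_left _ _).trans (min_le_right _ _)
  have hρ₀b : ρ₀ ≤ (R - H)/(2*(L+1)*(H+1)) := by
    rw [hρ₀def]; exact min_le_right _ _
  have h1ρ₀ : (0:ℝ) < 1 + ρ₀ := by linarith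
  set δ : ℝ := ρ₀ / (1 + ρ₀) with hδdef
  clear_value δ
  have hδpos : 0 < δ := by rw [hδdef]; exact div_pos hρ₀pos h1ρ₀
  have hδρ : δ ≤ ρ₀ := by rw [hδdef]; exact div_le_self hρ₀pos.le (by linarith)
  have hδ1 : δ < 1 := by rw [hδdef]; exact (div_lt_one h1ρ₀).mpr (by linarith)
  have hs₀δ : 1/(1 + ρ₀) = 1 - δ := by rw [hδdef]; field_simp; ring
  have hid : (1 + ρ₀) * δ = ρ₀ := by rw [hδdef]; field_simp
  have hδL : δ * L ≤ 1/2 := by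
    have h1 : δ * L ≤ (1/(2*(L+1))) * L :=
      mul_le_mul_of_nonneg_right (hδρ.trans hρ₀a) hL0
    have h2 : (1/(2*(L+1))) * L ≤ 1/2 := by
      rw [div_mul_eq_mul_div, div_le_iff₀ (by positivity : (0:ℝ) < 2*(L+1))]
      linarith
    linarith
  set c : ℝ := 1 + 2*(δ*L) with hcdef
  clear_value c
  have hc0 : (1:ℝ) ≤ c := by
    have : 0 ≤ δ * L := mul_nonneg hδpos.le hL0
    rw [hcdef]; linarith
  have key : ∀ a, p a ^ (1 - δ) ≤ p a * (1 + c * (δ * (-Real.log (p a)))) := by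
    intro a
    rcases eq_or_lt_of_le (hp0 a) with hz | hpa
    · rw [← hz, Real.zero_rpow (by linarith : (1:ℝ) - δ ≠ 0), zero_mul]
    · set u : ℝ := δ * (-Real.log (p a)) with hudef
      have hu0 : 0 ≤ u := mul_nonneg hδpos.le
        (neg_nonneg.mpr (Real.log_nonpos (hp0 a) (hple1 a)))
      have huL : u ≤ δ * L := mul_le_mul_of_nonneg_left (hLa a) hδpos.le
      have hu2 : u ≤ 1/2 := huL.trans hδL
      have heq : p a ^ (1 - δ) = p a * Real.exp u := by
        rw [Real.rpow_def_of_pos hpa,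
          show Real.log (p a) * (1 - δ) = Real.log (p a) + u by rw [hudef]; ring,
          Real.exp_add, Real.exp_log hpa]
      have hexp : Real.exp u * (1 - u) ≤ 1 := by
        have h1 : 1 - u ≤ Real.exp (-u) := by
          have := Real.add_one_le_exp (-u); linarith
        calc Real.exp u * (1 - u) ≤ Real.exp u * Real.exp (-u) :=
              mul_le_mul_of_nonneg_left h1 (Real.exp_pos u).le
          _ = 1 := by rw [← Real.exp_add]; simp
      have hexp2 : Real.exp u ≤ 1 + c * u := by
        rw [hcdef]
        nlinarith [Real.exp_pos u, hu0, huL, hδL, hu2, hexp, mul_nonneg hu0 hu0,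
          mul_nonneg (mul_nonneg hδpos.le hL0) hu0]
      rw [heq]
      exact mul_le_mul_of_nonneg_left hexp2 (hp0 a)
  have hsum : (∑ a, p a ^ (1 - δ)) ≤ 1 + c * (δ * H) := by
    calc (∑ a, p a ^ (1 - δ))
        ≤ ∑ a, p a * (1 + c * (δ * (-Real.log (p a)))) :=
          Finset.sum_le_sum fun a _ => key a
      _ = ∑ a, (p a + (c * δ) * (p a * (-Real.log (p a)))) :=
          Finset.sum_congr rfl fun a _ => by ring
      _ = (∑ a, p a) + (c * δ) * ∑ a, p a * (-Real.log (p a)) := by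
          rw [Finset.sum_add_distrib, Finset.mul_sum]
      _ = 1 + c * (δ * H) := by rw [hp1, ← hH']; ring
  have hS₀pos : 0 < ∑ a, p a ^ (1 - δ) := hSpos _ (by linarith)
  have hlog : Real.log (∑ a, p a ^ (1 - δ)) ≤ c * (δ * H) := by
    have h1 : Real.log (∑ a, p a ^ (1 - δ)) ≤ Real.log (1 + c * (δ * H)) :=
      Real.log_le_log hS₀pos hsum
    have hδH : 0 ≤ δ * H := mul_nonneg hδpos.le hH0
    have h2 : Real.log (1 + c * (δ * H)) ≤ (1 + c * (δ * H)) - 1 :=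
      Real.log_le_sub_one_of_pos (by nlinarith)
    linarith
  have h2δLH : 2*(δ*L)*H < R - H := by
    have hd : (0:ℝ) < 2*(L+1)*(H+1) := by positivity
    have hδb : δ * (2*(L+1)*(H+1)) ≤ R - H := by
      rw [← le_div_iff₀ hd]
      exact hδρ.trans hρ₀b
    have e : δ*(2*(L+1)*(H+1)) = 2*(δ*L)*H + 2*δ*(L+H+1) := by ring
    have hpos2 : 0 < 2*δ*(L+H+1) := by positivity
    linarith
  have hfρ₀ : 0 < ρ₀ * R - (1 + ρ₀) * Real.log (∑ a, p a ^ (1 / (1 + ρ₀))) := by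
    have hmul : (1 + ρ₀) * Real.log (∑ a, p a ^ (1 - δ)) ≤ (1 + ρ₀) * (c * (δ * H)) :=
      mul_le_mul_of_nonneg_left hlog (by linarith)
    have hident : (1 + ρ₀) * (c * (δ * H)) = ρ₀ * (c * H) := by
      calc (1 + ρ₀) * (c * (δ * H)) = ((1 + ρ₀) * δ) * (c * H) := by ring
        _ = ρ₀ * (c * H) := by rw [hid]
    have hgoal : 0 < ρ₀ * R - ρ₀ * (c * H) := by
      have : ρ₀ * (R - c * H) = ρ₀ * R - ρ₀ * (c * H) := by ring
      rw [← this]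
      refine mul_pos hρ₀pos ?_
      rw [hcdef]
      nlinarith [h2δLH]
    rw [hs₀δ]
    linarith [hmul, hident.le]
  have hfρ₀' : 0 < f ρ₀ := by simpa only [hfdef] using hfρ₀
  have hle : f ρ₀ ≤ f ρm := hmax ⟨hρ₀pos.le, hρ₀le1⟩
  refine ⟨ρm, hρm, ?_, ?_⟩
  · simpa only [hfdef] using lt_of_lt_of_le hfρ₀' hle
  · simpa only [hfdef] using hsup

end Aux

set_option maxHeartbeats 1000000 in
/-- Streaming point-to-point coding, ML decoding (Theorem 2): if `R = log m > H(p)`,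
the probability that some string in the bin of the source, at least as likely as the
source string, differs from it within the first `n − Δ` positions decays like
`exp(−Δ E_ML(R))`. -/
theorem statement0 {X : Type*} [Fintype X] [DecidableEq X] [Nonempty X]
    (p : X → ℝ) (hp : IsPMF p)
    (m : ℕ) (hm : 2 ≤ m) (R : ℝ) (hR : R = Real.log m) (hRH : entropy p < R) :
    ∃ K : ℝ, 0 < K ∧
      ∀ n : ℕ, 1 ≤ n → ∀ Δ : ℕ, Δ ≤ n - 1 →
        prob
          (fun ω : (Fin n → X) × BinScheme X n m =>
            (∏ i, p (ω.1 i)) / (Fintype.card (BinScheme X n m) : ℝ))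
          (fun ω => ∃ x' : Fin n → X,
            sameBin ω.2 x' ω.1 ∧
            (∏ i, p (ω.1 i)) ≤ (∏ i, p (x' i)) ∧
            ∃ i : Fin n, (i : ℕ) < n - Δ ∧ x' i ≠ ω.1 i)
        ≤ K * Real.exp (-(Δ : ℝ) * EML p R) := by
  classical
  obtain ⟨hp0, hp1⟩ := hp
  have hRH' : -∑ a, p a * Real.log (p a) < R := hRH
  obtain ⟨ρ, hρmem, hfpos, hsup⟩ := Aux.eml_max p hp0 hp1 R hRH'
  obtain ⟨hρ0, hρ1⟩ := hρmem
  set g : ℝ := ∑ a, p a ^ (1 / (1 + ρ)) with hgdef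
  set E : ℝ := ρ * R - (1 + ρ) * Real.log g with hEdef
  have hEML : EML p R = E := by rw [EML]; exact hsup
  have hgpos : 0 < g := by
    have hexa : ∃ a : X, 0 < p a := by
      by_contra hcon
      push_neg at hcon
      have : ∑ a, p a = 0 := Finset.sum_eq_zero fun a _ => le_antisymm (hcon a) (hp0 a)
      rw [hp1] at this; norm_num at this
    obtain ⟨a, ha⟩ := hexa
    rw [hgdef]
    calc (0:ℝ) < p a ^ (1/(1+ρ)) := Real.rpow_pos_of_pos ha _
      _ ≤ g := Finset.single_le_sum
          (fun b _ => Real.rpow_nonneg (hp0 b) _) (Finset.mem_univ a)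
  set r : ℝ := Real.exp (-E) with hrdef
  have hr0 : 0 < r := Real.exp_pos _
  have hr1 : r < 1 := by
    rw [hrdef]
    exact Real.exp_lt_one_iff.mpr (by linarith)
  have hm1 : 1 ≤ m := le_trans (by norm_num) hm
  have hmpos : (0:ℝ) < (m:ℝ) := by exact_mod_cast Nat.lt_of_lt_of_le Nat.zero_lt_one hm1
  -- the key identity: Gallager base = r
  have hbase : ((m:ℝ)⁻¹) ^ ρ * (g ^ ρ * g) = r := by
    have h1 : ((m:ℝ)⁻¹) ^ ρ = Real.exp (-(ρ * R)) := by
      rw [Real.rpow_def_of_pos (by positivity), Real.log_inv, hR]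
      ring_nf
    have h2 : g ^ ρ * g = Real.exp ((1 + ρ) * Real.log g) := by
      have e1 : g ^ ((1:ℝ) + ρ) = g ^ (1:ℝ) * g ^ ρ := Real.rpow_add hgpos 1 ρ
      have e2 : g ^ ((1:ℝ) + ρ) = Real.exp (Real.log g * (1 + ρ)) :=
        Real.rpow_def_of_pos hgpos _
      rw [Real.rpow_one] at e1
      calc g ^ ρ * g = g * g ^ ρ := mul_comm _ _
        _ = g ^ ((1:ℝ) + ρ) := e1.symm
        _ = Real.exp (Real.log g * (1 + ρ)) := e2
        _ = Real.exp ((1 + ρ) * Real.log g) := by rw [mul_comm]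
    rw [h1, h2, ← Real.exp_add, hrdef, hEdef]
    ring_nf
  refine ⟨r / (1 - r), div_pos hr0 (by linarith), ?_⟩
  intro n hn Δ hΔ
  have hΔn : Δ + 1 ≤ n := by omega
  -- abbreviations are written out explicitly below
  have hcBpos : (0:ℝ) < (Fintype.card (BinScheme X n m) : ℝ) := by
    haveI : Nonempty (BinScheme X n m) := ⟨fun j _ => (⟨0, by omega⟩ : Fin m)⟩
    exact_mod_cast Fintype.card_pos
  set cB : ℝ := (Fintype.card (BinScheme X n m) : ℝ) with hcB
  have hpx0 : ∀ x : Fin n → X, 0 ≤ ∏ j, p (x j) :=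
    fun x => Finset.prod_nonneg fun j _ => hp0 _
  -- covering by first-difference events
  have hcover : ∀ (x : Fin n → X) (b : BinScheme X n m),
      (∃ x' : Fin n → X, sameBin b x' x ∧ (∏ j, p (x j)) ≤ (∏ j, p (x' j)) ∧
        ∃ i : Fin n, (i:ℕ) < n - Δ ∧ x' i ≠ x i) →
      ∃ i ∈ Finset.univ.filter (fun i : Fin n => (i:ℕ) < n - Δ),
        (∃ x' : Fin n → X, sameBin b x' x ∧ (∏ j, p (x j)) ≤ (∏ j, p (x' j)) ∧
          (∀ j : Fin n, (j:ℕ) < (i:ℕ) → x' j = x j) ∧ x' i ≠ x i) := by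
    rintro x b ⟨x', hsb, hple, i0, hi0, hne0⟩
    have hne' : (Finset.univ.filter fun j : Fin n => x' j ≠ x j).Nonempty :=
      ⟨i0, by simp [hne0]⟩
    set d := (Finset.univ.filter fun j : Fin n => x' j ≠ x j).min' hne' with hd
    have hdmem := Finset.min'_mem _ hne'
    rw [← hd, Finset.mem_filter] at hdmem
    have hdle : d ≤ i0 := Finset.min'_le _ _ (by simp [hne0])
    refine ⟨d, ?_, x', hsb, hple, ?_, hdmem.2⟩
    · rw [Finset.mem_filter]
      exact ⟨Finset.mem_univ d, lt_of_le_of_lt hdle hi0⟩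
    · intro j hj
      by_contra hnej
      have : d ≤ j := Finset.min'_le _ _ (by simp [hnej])
      have : (d:ℕ) ≤ (j:ℕ) := this
      omega
  -- pointwise union bound over first-difference index
  have h1 : ∀ (x : Fin n → X) (b : BinScheme X n m),
      (if (∃ x' : Fin n → X, sameBin b x' x ∧ (∏ j, p (x j)) ≤ (∏ j, p (x' j)) ∧
          ∃ i : Fin n, (i:ℕ) < n - Δ ∧ x' i ≠ x i) then (∏ j, p (x j)) / cB else 0)
      ≤ ∑ i ∈ Finset.univ.filter (fun i : Fin n => (i:ℕ) < n - Δ),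
          (if (∃ x' : Fin n → X, sameBin b x' x ∧ (∏ j, p (x j)) ≤ (∏ j, p (x' j)) ∧
            (∀ j : Fin n, (j:ℕ) < (i:ℕ) → x' j = x j) ∧ x' i ≠ x i)
            then (∏ j, p (x j)) / cB else 0) := by
    intro x b
    have hnn : ∀ i ∈ Finset.univ.filter (fun i : Fin n => (i:ℕ) < n - Δ),
        (0:ℝ) ≤ (if (∃ x' : Fin n → X, sameBin b x' x ∧
            (∏ j, p (x j)) ≤ (∏ j, p (x' j)) ∧
            (∀ j : Fin n, (j:ℕ) < (i:ℕ) → x' j = x j) ∧ x' i ≠ x i)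
            then (∏ j, p (x j)) / cB else 0) := by
      intro i _
      split
      · exact div_nonneg (hpx0 x) hcBpos.le
      · exact le_rfl
    by_cases hA : (∃ x' : Fin n → X, sameBin b x' x ∧ (∏ j, p (x j)) ≤ (∏ j, p (x' j)) ∧
        ∃ i : Fin n, (i:ℕ) < n - Δ ∧ x' i ≠ x i)
    · rw [if_pos hA]
      obtain ⟨i, hiF, hAi⟩ := hcover x b hA
      calc (∏ j, p (x j)) / cB
          = (if (∃ x' : Fin n → X, sameBin b x' x ∧ (∏ j, p (x j)) ≤ (∏ j, p (x' j)) ∧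
              (∀ j : Fin n, (j:ℕ) < (i:ℕ) → x' j = x j) ∧ x' i ≠ x i)
              then (∏ j, p (x j)) / cB else 0) := (if_pos hAi).symm
        _ ≤ _ := Finset.single_le_sum hnn hiF
    · rw [if_neg hA]
      exact Finset.sum_nonneg hnn
  -- the per-index bound
  have keyix : ∀ i : Fin n, (i:ℕ) < n - Δ →
      (∑ x : Fin n → X, ∑ b : BinScheme X n m,
        (if (∃ x' : Fin n → X, sameBin b x' x ∧ (∏ j, p (x j)) ≤ (∏ j, p (x' j)) ∧
          (∀ j : Fin n, (j:ℕ) < (i:ℕ) → x' j = x j) ∧ x' i ≠ x i)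
          then (∏ j, p (x j)) / cB else 0))
      ≤ r ^ (n - (i:ℕ)) := by
    intro i _
    have hperx : ∀ x : Fin n → X,
        (∑ b : BinScheme X n m,
          (if (∃ x' : Fin n → X, sameBin b x' x ∧ (∏ j, p (x j)) ≤ (∏ j, p (x' j)) ∧
            (∀ j : Fin n, (j:ℕ) < (i:ℕ) → x' j = x j) ∧ x' i ≠ x i)
            then (∏ j, p (x j)) / cB else 0))
        ≤ (∏ j, p (x j)) * min 1 (((m:ℝ)⁻¹) ^ (n - (i:ℕ)) *
            ∑ x' : Fin n → X, (if ((∀ j : Fin n, (j:ℕ) < (i:ℕ) → x' j = x j) ∧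
              (∏ j, p (x j)) ≤ ∏ j, p (x' j)) then (1:ℝ) else 0)) := by
      intro x
      set N : ℝ := ∑ x' : Fin n → X, (if ((∀ j : Fin n, (j:ℕ) < (i:ℕ) → x' j = x j) ∧
          (∏ j, p (x j)) ≤ ∏ j, p (x' j)) then (1:ℝ) else 0) with hN
      have hN0 : 0 ≤ N := Finset.sum_nonneg fun x' _ => by positivity
      have hb1 : (∑ b : BinScheme X n m,
          (if (∃ x' : Fin n → X, sameBin b x' x ∧ (∏ j, p (x j)) ≤ (∏ j, p (x' j)) ∧
            (∀ j : Fin n, (j:ℕ) < (i:ℕ) → x' j = x j) ∧ x' i ≠ x i)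
            then (1:ℝ) else 0)) ≤ cB := by
        calc (∑ b : BinScheme X n m,
            (if (∃ x' : Fin n → X, sameBin b x' x ∧ (∏ j, p (x j)) ≤ (∏ j, p (x' j)) ∧
              (∀ j : Fin n, (j:ℕ) < (i:ℕ) → x' j = x j) ∧ x' i ≠ x i)
              then (1:ℝ) else 0))
            ≤ ∑ _b : BinScheme X n m, (1:ℝ) := by
              refine Finset.sum_le_sum fun b _ => ?_
              split
              · exact le_rfl
              · exact zero_le_one
          _ = cB := by rw [Finset.sum_const, Finset.card_univ, nsmul_eq_mul, mul_one, hcB]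
      have hb2 : (∑ b : BinScheme X n m,
          (if (∃ x' : Fin n → X, sameBin b x' x ∧ (∏ j, p (x j)) ≤ (∏ j, p (x' j)) ∧
            (∀ j : Fin n, (j:ℕ) < (i:ℕ) → x' j = x j) ∧ x' i ≠ x i)
            then (1:ℝ) else 0)) ≤ cB * (((m:ℝ)⁻¹) ^ (n - (i:ℕ)) * N) := by
        have step1 : ∀ b : BinScheme X n m,
            (if (∃ x' : Fin n → X, sameBin b x' x ∧ (∏ j, p (x j)) ≤ (∏ j, p (x' j)) ∧
              (∀ j : Fin n, (j:ℕ) < (i:ℕ) → x' j = x j) ∧ x' i ≠ x i)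
              then (1:ℝ) else 0)
            ≤ ∑ x' : Fin n → X,
                (if ((∏ j, p (x j)) ≤ (∏ j, p (x' j)) ∧
                  (∀ j : Fin n, (j:ℕ) < (i:ℕ) → x' j = x j) ∧ x' i ≠ x i)
                  then (1:ℝ) else 0) * (if sameBin b x' x then (1:ℝ) else 0) := by
          intro b
          have hnn : ∀ x' ∈ (Finset.univ : Finset (Fin n → X)),
              (0:ℝ) ≤ (if ((∏ j, p (x j)) ≤ (∏ j, p (x' j)) ∧
                (∀ j : Fin n, (j:ℕ) < (i:ℕ) → x' j = x j) ∧ x' i ≠ x i)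
                then (1:ℝ) else 0) * (if sameBin b x' x then (1:ℝ) else 0) := by
            intro x' _
            apply mul_nonneg <;> split <;> norm_num
          by_cases hb : ∃ x' : Fin n → X, sameBin b x' x ∧
              (∏ j, p (x j)) ≤ (∏ j, p (x' j)) ∧
              (∀ j : Fin n, (j:ℕ) < (i:ℕ) → x' j = x j) ∧ x' i ≠ x i
          · rw [if_pos hb]
            obtain ⟨x₀, hsb, hple, hagree, hnex⟩ := hb
            have hterm : (if ((∏ j, p (x j)) ≤ (∏ j, p (x₀ j)) ∧
                (∀ j : Fin n, (j:ℕ) < (i:ℕ) → x₀ j = x j) ∧ x₀ i ≠ x i)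
                then (1:ℝ) else 0) * (if sameBin b x₀ x then (1:ℝ) else 0) = 1 := by
              rw [if_pos ⟨hple, hagree, hnex⟩, if_pos hsb, mul_one]
            calc (1:ℝ) = _ := hterm.symm
              _ ≤ _ := Finset.single_le_sum hnn (Finset.mem_univ x₀)
          · rw [if_neg hb]
            exact Finset.sum_nonneg hnn
        calc (∑ b : BinScheme X n m,
            (if (∃ x' : Fin n → X, sameBin b x' x ∧ (∏ j, p (x j)) ≤ (∏ j, p (x' j)) ∧
              (∀ j : Fin n, (j:ℕ) < (i:ℕ) → x' j = x j) ∧ x' i ≠ x i)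
              then (1:ℝ) else 0))
            ≤ ∑ b : BinScheme X n m, ∑ x' : Fin n → X,
                (if ((∏ j, p (x j)) ≤ (∏ j, p (x' j)) ∧
                  (∀ j : Fin n, (j:ℕ) < (i:ℕ) → x' j = x j) ∧ x' i ≠ x i)
                  then (1:ℝ) else 0) * (if sameBin b x' x then (1:ℝ) else 0) :=
              Finset.sum_le_sum fun b _ => step1 b
          _ = ∑ x' : Fin n → X,
                (if ((∏ j, p (x j)) ≤ (∏ j, p (x' j)) ∧
                  (∀ j : Fin n, (j:ℕ) < (i:ℕ) → x' j = x j) ∧ x' i ≠ x i)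
                  then (1:ℝ) else 0) * ∑ b : BinScheme X n m,
                    (if sameBin b x' x then (1:ℝ) else 0) := by
              rw [Finset.sum_comm]
              exact Finset.sum_congr rfl fun x' _ => (Finset.mul_sum _ _ _).symm
          _ ≤ ∑ x' : Fin n → X,
                (if ((∀ j : Fin n, (j:ℕ) < (i:ℕ) → x' j = x j) ∧
                  (∏ j, p (x j)) ≤ ∏ j, p (x' j)) then (1:ℝ) else 0) *
                  (cB * ((m:ℝ)⁻¹ ^ (n - (i:ℕ)))) := by
              refine Finset.sum_le_sum fun x' _ => ?_
              by_cases hc : (∏ j, p (x j)) ≤ (∏ j, p (x' j)) ∧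
                  (∀ j : Fin n, (j:ℕ) < (i:ℕ) → x' j = x j) ∧ x' i ≠ x i
              · rw [if_pos hc, if_pos ⟨hc.2.1, hc.1⟩, one_mul, one_mul]
                exact Aux.collision hm1 x x' i hc.2.2
              · rw [if_neg hc, zero_mul]
                have h0 : (0:ℝ) ≤ cB * ((m:ℝ)⁻¹ ^ (n - (i:ℕ))) := by positivity
                split
                · rw [one_mul]; exact h0
                · rw [zero_mul]
          _ = N * (cB * ((m:ℝ)⁻¹ ^ (n - (i:ℕ)))) := by rw [hN, ← Finset.sum_mul]
          _ = cB * (((m:ℝ)⁻¹) ^ (n - (i:ℕ)) * N) := by ring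
      have hbmin : (∑ b : BinScheme X n m,
          (if (∃ x' : Fin n → X, sameBin b x' x ∧ (∏ j, p (x j)) ≤ (∏ j, p (x' j)) ∧
            (∀ j : Fin n, (j:ℕ) < (i:ℕ) → x' j = x j) ∧ x' i ≠ x i)
            then (1:ℝ) else 0)) ≤ cB * min 1 (((m:ℝ)⁻¹) ^ (n - (i:ℕ)) * N) := by
        rcases le_total (1:ℝ) (((m:ℝ)⁻¹) ^ (n - (i:ℕ)) * N) with h | h
        · rw [min_eq_left h, mul_one]; exact hb1
        · rw [min_eq_right h]; exact hb2
      have hsplit : (∑ b : BinScheme X n m,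
          (if (∃ x' : Fin n → X, sameBin b x' x ∧ (∏ j, p (x j)) ≤ (∏ j, p (x' j)) ∧
            (∀ j : Fin n, (j:ℕ) < (i:ℕ) → x' j = x j) ∧ x' i ≠ x i)
            then (∏ j, p (x j)) / cB else 0))
          = ((∏ j, p (x j)) / cB) * ∑ b : BinScheme X n m,
            (if (∃ x' : Fin n → X, sameBin b x' x ∧ (∏ j, p (x j)) ≤ (∏ j, p (x' j)) ∧
              (∀ j : Fin n, (j:ℕ) < (i:ℕ) → x' j = x j) ∧ x' i ≠ x i)
              then (1:ℝ) else 0) := by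
        rw [Finset.mul_sum]
        refine Finset.sum_congr rfl fun b _ => ?_
        split
        · rw [mul_one]
        · rw [mul_zero]
      rw [hsplit]
      calc ((∏ j, p (x j)) / cB) * ∑ b : BinScheme X n m,
            (if (∃ x' : Fin n → X, sameBin b x' x ∧ (∏ j, p (x j)) ≤ (∏ j, p (x' j)) ∧
              (∀ j : Fin n, (j:ℕ) < (i:ℕ) → x' j = x j) ∧ x' i ≠ x i)
              then (1:ℝ) else 0)
          ≤ ((∏ j, p (x j)) / cB) * (cB * min 1 (((m:ℝ)⁻¹) ^ (n - (i:ℕ)) * N)) :=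
            mul_le_mul_of_nonneg_left hbmin (div_nonneg (hpx0 x) hcBpos.le)
        _ = (∏ j, p (x j)) * min 1 (((m:ℝ)⁻¹) ^ (n - (i:ℕ)) * N) := by
            field_simp
    calc (∑ x : Fin n → X, ∑ b : BinScheme X n m,
          (if (∃ x' : Fin n → X, sameBin b x' x ∧ (∏ j, p (x j)) ≤ (∏ j, p (x' j)) ∧
            (∀ j : Fin n, (j:ℕ) < (i:ℕ) → x' j = x j) ∧ x' i ≠ x i)
            then (∏ j, p (x j)) / cB else 0))
        ≤ ∑ x : Fin n → X, (∏ j, p (x j)) * min 1 (((m:ℝ)⁻¹) ^ (n - (i:ℕ)) *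
            ∑ x' : Fin n → X, (if ((∀ j : Fin n, (j:ℕ) < (i:ℕ) → x' j = x j) ∧
              (∏ j, p (x j)) ≤ ∏ j, p (x' j)) then (1:ℝ) else 0)) :=
          Finset.sum_le_sum fun x _ => hperx x
      _ ≤ (((m:ℝ)⁻¹) ^ ρ * (g ^ ρ * g)) ^ (n - (i:ℕ)) :=
          Aux.gallager p hp0 hp1 hm1 ρ hρ0 hρ1 i.isLt
      _ = r ^ (n - (i:ℕ)) := by rw [hbase]
  -- geometric sum
  have geo : (∑ i ∈ Finset.univ.filter (fun i : Fin n => (i:ℕ) < n - Δ), r ^ (n - (i:ℕ)))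
      ≤ r / (1 - r) * Real.exp (-(Δ:ℝ) * E) := by
    have e1 : (∑ i ∈ Finset.univ.filter (fun i : Fin n => (i:ℕ) < n - Δ), r ^ (n - (i:ℕ)))
        = ∑ k ∈ Finset.range (n - Δ), r ^ (n - k) := by
      rw [Finset.sum_filter, Fin.sum_univ_eq_sum_range
        (fun k => if k < n - Δ then r ^ (n - k) else 0), ← Finset.sum_filter]
      congr 1
      ext k
      simp only [Finset.mem_filter, Finset.mem_range]
      omega
    have e2 : ∑ k ∈ Finset.range (n - Δ), r ^ (n - k)
        = ∑ k ∈ Finset.range (n - Δ), r ^ (Δ + 1 + k) := by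
      rw [← Finset.sum_range_reflect]
      refine Finset.sum_congr rfl fun k hk => ?_
      rw [Finset.mem_range] at hk
      congr 1
      omega
    have e3 : ∑ k ∈ Finset.range (n - Δ), r ^ (Δ + 1 + k)
        = r ^ (Δ + 1) * ∑ k ∈ Finset.range (n - Δ), r ^ k := by
      rw [Finset.mul_sum]
      exact Finset.sum_congr rfl fun k _ => by rw [pow_add]
    have e4 : ∑ k ∈ Finset.range (n - Δ), r ^ k ≤ 1 / (1 - r) := by
      rw [geom_sum_eq (by linarith : r ≠ 1)]
      rw [show (r ^ (n - Δ) - 1) / (r - 1) = (1 - r ^ (n - Δ)) / (1 - r) by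
        rw [div_eq_div_iff (by linarith) (by linarith)]; ring]
      have hpow : 0 ≤ r ^ (n - Δ) := by positivity
      rw [div_le_div_iff₀ (by linarith) (by linarith)]
      nlinarith
    have e5 : r ^ Δ = Real.exp (-(Δ:ℝ) * E) := by
      rw [hrdef, ← Real.exp_nat_mul]
      congr 1
      ring
    rw [e1, e2, e3]
    have h6 : r ^ (Δ + 1) = r * r ^ Δ := by ring
    calc r ^ (Δ + 1) * ∑ k ∈ Finset.range (n - Δ), r ^ k
        ≤ r ^ (Δ + 1) * (1 / (1 - r)) :=
          mul_le_mul_of_nonneg_left e4 (by positivity)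
      _ = r / (1 - r) * r ^ Δ := by rw [h6]; ring
      _ = r / (1 - r) * Real.exp (-(Δ:ℝ) * E) := by rw [e5]
  -- final assembly
  rw [hEML]
  have h0 : prob
      (fun ω : (Fin n → X) × BinScheme X n m =>
        (∏ i, p (ω.1 i)) / (Fintype.card (BinScheme X n m) : ℝ))
      (fun ω => ∃ x' : Fin n → X,
        sameBin ω.2 x' ω.1 ∧
        (∏ i, p (ω.1 i)) ≤ (∏ i, p (x' i)) ∧
        ∃ i : Fin n, (i : ℕ) < n - Δ ∧ x' i ≠ ω.1 i)
      = ∑ x : Fin n → X, ∑ b : BinScheme X n m,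
        (if (∃ x' : Fin n → X, sameBin b x' x ∧ (∏ j, p (x j)) ≤ (∏ j, p (x' j)) ∧
          ∃ i : Fin n, (i:ℕ) < n - Δ ∧ x' i ≠ x i) then (∏ j, p (x j)) / cB else 0) := by
    rw [prob, Fintype.sum_prod_type]
    refine Finset.sum_congr rfl fun x _ => Finset.sum_congr rfl fun b _ => ?_
    congr 1
  rw [h0]
  calc (∑ x : Fin n → X, ∑ b : BinScheme X n m,
        (if (∃ x' : Fin n → X, sameBin b x' x ∧ (∏ j, p (x j)) ≤ (∏ j, p (x' j)) ∧
          ∃ i : Fin n, (i:ℕ) < n - Δ ∧ x' i ≠ x i) then (∏ j, p (x j)) / cB else 0))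
      ≤ ∑ x : Fin n → X, ∑ b : BinScheme X n m,
          ∑ i ∈ Finset.univ.filter (fun i : Fin n => (i:ℕ) < n - Δ),
          (if (∃ x' : Fin n → X, sameBin b x' x ∧ (∏ j, p (x j)) ≤ (∏ j, p (x' j)) ∧
            (∀ j : Fin n, (j:ℕ) < (i:ℕ) → x' j = x j) ∧ x' i ≠ x i)
            then (∏ j, p (x j)) / cB else 0) :=
        Finset.sum_le_sum fun x _ => Finset.sum_le_sum fun b _ => h1 x b
    _ = ∑ i ∈ Finset.univ.filter (fun i : Fin n => (i:ℕ) < n - Δ),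
          ∑ x : Fin n → X, ∑ b : BinScheme X n m,
          (if (∃ x' : Fin n → X, sameBin b x' x ∧ (∏ j, p (x j)) ≤ (∏ j, p (x' j)) ∧
            (∀ j : Fin n, (j:ℕ) < (i:ℕ) → x' j = x j) ∧ x' i ≠ x i)
            then (∏ j, p (x j)) / cB else 0) := by
        rw [Finset.sum_congr rfl fun x _ => Finset.sum_comm, Finset.sum_comm]
    _ ≤ ∑ i ∈ Finset.univ.filter (fun i : Fin n => (i:ℕ) < n - Δ), r ^ (n - (i:ℕ)) := by
        refine Finset.sum_le_sum fun i hi => ?_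
        rw [Finset.mem_filter] at hi
        exact keyix i hi.2
    _ ≤ r / (1 - r) * Real.exp (-(Δ:ℝ) * E) := geo


end
end

section
/- Suppose R = log m > H(p). Then for every E < E_UN(R) there exists a constant K > 0 such that for every n ≥ 1 and every integer Δ with 0 ≤ Δ ≤ n−1, the probability that there exist an index l with 1 ≤ l ≤ n−Δ and a string x̃ ∈ X^n lying in the same bin as the source string x^n, with x̃ agreeing with x^n in the first l−1 positions, x̃_l ≠ x_l, and Ĥ(x̃_l^n) ≤ Ĥ(x_l^n), is at most K·exp(−Δ·E). -/
open Classical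
open scoped BigOperators

noncomputable section

/-- Absolute continuity of `q` with respect to `p`. -/
def AbsCont {Z : Type*} (q p : Z → ℝ) : Prop := ∀ z, p z = 0 → q z = 0

/-- Kullback–Leibler divergence in nats (real-valued formula; it agrees with the usual
extended-valued divergence whenever `AbsCont q p` holds, and the extended-valued
divergence is `+∞` otherwise, so infima of `D(q‖p) + …` over all pmfs `q` coincide
with infima of this real-valued quantity over absolutely continuous pmfs `q`). -/
def klDiv {Z : Type*} [Fintype Z] (q p : Z → ℝ) : ℝ :=
  ∑ z, q z * Real.log (q z / p z)

/-- `E_UN(R) = inf_q [D(q‖p) + |R − H(q)|⁺]`, the infimum over pmfs `q` (equivalently,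
over absolutely continuous pmfs `q`, since otherwise `D(q‖p) = +∞`). -/
def EUN {X : Type*} [Fintype X] (p : X → ℝ) (R : ℝ) : ℝ :=
  sInf ((fun q : X → ℝ => klDiv q p + max (R - entropy q) 0) ''
    {q | IsPMF q ∧ AbsCont q p})

/-- The type (empirical distribution) of a string. -/
def typeOf {X : Type*} [Fintype X] [DecidableEq X] {k : ℕ} (w : Fin k → X) : X → ℝ :=
  fun a => ((Finset.univ.filter fun i => w i = a).card : ℝ) / (k : ℝ)

/-- Empirical entropy: the entropy of the type of `w`. -/
def empEntropy {X : Type*} [Fintype X] [DecidableEq X] {k : ℕ} (w : Fin k → X) : ℝ :=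
  entropy (typeOf w)

/-- The substring `w_a^b` (1-indexed, inclusive endpoints). -/
def substr {X : Type*} {n : ℕ} (w : Fin n → X) (a b : ℕ) (h : 1 ≤ a ∧ b ≤ n) :
    Fin (b + 1 - a) → X :=
  fun i => w ⟨a - 1 + i.val, by have := i.isLt; omega⟩

/-- `w` agrees with `x` in the first `l-1` positions and, when `l ≤ n`, differs from `x`
at (1-indexed) position `l`.  When `l = n+1` this says `w = x`. -/
def divergesAt {X : Type*} {n : ℕ} (w x : Fin n → X) (l : ℕ) (hl : 1 ≤ l) : Prop :=
  (∀ i : Fin n, (i : ℕ) + 1 < l → w i = x i) ∧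
    ∀ h : l ≤ n, w ⟨l - 1, by omega⟩ ≠ x ⟨l - 1, by omega⟩

namespace MyAux
open Finset Real
variable {X : Type*} [Fintype X] [DecidableEq X]

def cnt {k : ℕ} (w : Fin k → X) (a : X) : ℕ := (Finset.univ.filter fun i => w i = a).card

set_option linter.unusedSectionVars false

lemma sum_cnt {k : ℕ} (w : Fin k → X) : ∑ a, cnt w a = k := by
  classical
  have h := Finset.card_eq_sum_card_fiberwise (f := w) (s := Finset.univ)
    (t := Finset.univ) (fun i _ => Finset.mem_univ _)
  simp only [Finset.card_univ, Fintype.card_fin] at h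
  exact h.symm

lemma cnt_le {k : ℕ} (w : Fin k → X) (a : X) : cnt w a ≤ k := by
  classical
  simpa [cnt] using (Finset.card_filter_le Finset.univ (fun i => w i = a)).trans_eq (by simp)

lemma typeOf_eq_cnt {k : ℕ} (w : Fin k → X) (a : X) : typeOf w a = (cnt w a : ℝ) / k := rfl

lemma typeOf_nonneg {k : ℕ} (w : Fin k → X) (a : X) : 0 ≤ typeOf w a := by
  rw [typeOf_eq_cnt]; positivity

lemma cnt_eq {k : ℕ} (hk : 1 ≤ k) (w : Fin k → X) (a : X) :
    (cnt w a : ℝ) = k * typeOf w a := by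
  rw [typeOf_eq_cnt]; field_simp

lemma isPMF_typeOf {k : ℕ} (hk : 1 ≤ k) (w : Fin k → X) : IsPMF (typeOf w) := by
  refine ⟨typeOf_nonneg w, ?_⟩
  have h1 : ∑ a, typeOf w a = (∑ a, (cnt w a : ℝ)) / k := by
    rw [Finset.sum_div]; rfl
  rw [h1]
  have : (∑ a, (cnt w a : ℝ)) = (k : ℝ) := by
    rw [← Nat.cast_sum, sum_cnt]
  rw [this]; field_simp

lemma prod_comp_cnt {k : ℕ} (w : Fin k → X) (f : X → ℝ) :
    ∏ i, f (w i) = ∏ a, f a ^ cnt w a := by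
  classical
  rw [← Finset.prod_fiberwise_of_maps_to (g := w) (t := Finset.univ)
    (fun i _ => Finset.mem_univ _) (fun i => f (w i))]
  refine Finset.prod_congr rfl fun a _ => ?_
  rw [show (∏ i ∈ Finset.univ.filter fun i => w i = a, f (w i)) =
      ∏ i ∈ Finset.univ.filter fun i => w i = a, f a from
    Finset.prod_congr rfl fun i hi => by rw [(Finset.mem_filter.mp hi).2]]
  rw [Finset.prod_const]; rfl

lemma prod_pow_cnt_eq_exp {k : ℕ} (hk : 1 ≤ k) (w : Fin k → X) (f : X → ℝ)
    (hf : ∀ a, cnt w a ≠ 0 → 0 < f a) :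
    ∏ a, f a ^ cnt w a = Real.exp ((k : ℝ) * ∑ a, typeOf w a * Real.log (f a)) := by
  rw [Finset.mul_sum, Real.exp_sum]
  refine Finset.prod_congr rfl fun a _ => ?_
  by_cases h : cnt w a = 0
  · rw [h, pow_zero]
    have : typeOf w a = 0 := by rw [typeOf_eq_cnt, h]; simp
    rw [this]; simp
  · have hfa := hf a h
    have : (k : ℝ) * (typeOf w a * Real.log (f a)) = (cnt w a : ℝ) * Real.log (f a) := by
      rw [cnt_eq hk]; ring
    rw [this, Real.exp_nat_mul, Real.exp_log hfa]

end MyAux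

namespace MyAux
open Finset Real
variable {X : Type*} [Fintype X] [DecidableEq X]
set_option linter.unusedSectionVars false

/-- Product of type probabilities over a string in the same type class. -/
lemma prod_typeOf_fiber {k : ℕ} (hk : 1 ≤ k) (y y' : Fin k → X) (h : typeOf y' = typeOf y) :
    ∏ i, typeOf y (y' i) = Real.exp (-(k : ℝ) * empEntropy y) := by
  have hcnt : ∀ a, cnt y' a = cnt y a := by
    intro a
    have := congrFun h a
    rw [typeOf_eq_cnt, typeOf_eq_cnt] at this
    have hk0 : (k : ℝ) ≠ 0 := by positivity
    field_simp at this
    exact_mod_cast this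
  rw [prod_comp_cnt]
  have : ∀ a, cnt y' a ≠ 0 → 0 < typeOf y a := by
    intro a ha
    rw [typeOf_eq_cnt]
    have : 0 < cnt y a := by rw [← hcnt]; omega
    positivity
  calc ∏ a, typeOf y a ^ cnt y' a = ∏ a, typeOf y a ^ cnt y a := by
        refine Finset.prod_congr rfl fun a _ => by rw [hcnt]
    _ = Real.exp ((k : ℝ) * ∑ a, typeOf y a * Real.log (typeOf y a)) := by
        refine prod_pow_cnt_eq_exp hk y (typeOf y) ?_
        intro a ha
        rw [typeOf_eq_cnt]
        have : 0 < cnt y a := by omega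
        positivity
    _ = Real.exp (-(k : ℝ) * empEntropy y) := by
        congr 1
        simp only [empEntropy, entropy]
        ring

/-- Size of a type class times `exp(-k H)` is at most one. -/
lemma fiber_card_le {k : ℕ} (hk : 1 ≤ k) (y : Fin k → X) :
    ((Finset.univ.filter fun y' : Fin k → X => typeOf y' = typeOf y).card : ℝ) *
      Real.exp (-(k : ℝ) * empEntropy y) ≤ 1 := by
  have h1 : ((Finset.univ.filter fun y' : Fin k → X => typeOf y' = typeOf y).card : ℝ) *
      Real.exp (-(k : ℝ) * empEntropy y)
      = ∑ y' ∈ Finset.univ.filter fun y' : Fin k → X => typeOf y' = typeOf y,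
          ∏ i, typeOf y (y' i) := by
    rw [Finset.sum_congr rfl fun y' hy' =>
      prod_typeOf_fiber hk y y' (Finset.mem_filter.mp hy').2]
    rw [Finset.sum_const, nsmul_eq_mul]
  rw [h1]
  have h2 : (∑ y' ∈ Finset.univ.filter fun y' : Fin k → X => typeOf y' = typeOf y,
        ∏ i, typeOf y (y' i)) ≤ ∑ y' : Fin k → X, ∏ i, typeOf y (y' i) := by
    refine Finset.sum_le_sum_of_subset_of_nonneg (Finset.filter_subset _ _) ?_
    intro y' _ _
    exact Finset.prod_nonneg fun i _ => typeOf_nonneg y (y' i)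
  have h3 : (∑ y' : Fin k → X, ∏ i, typeOf y (y' i)) = 1 := by
    rw [← Fintype.sum_pow (typeOf y) k, (isPMF_typeOf hk y).2, one_pow]
  linarith

/-- Number of types is at most `(k+1)^|X|`. -/
lemma card_image_typeOf_le {k : ℕ} :
    ((Finset.univ.image fun y : Fin k → X => typeOf y).card : ℝ) ≤
      ((k : ℝ) + 1) ^ Fintype.card X := by
  have hsub : (Finset.univ.image fun y : Fin k → X => typeOf y) ⊆
      Finset.univ.image fun c : X → Fin (k + 1) => (fun a => ((c a : ℕ) : ℝ) / k) := by
    intro q hq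
    obtain ⟨y, _, rfl⟩ := Finset.mem_image.mp hq
    refine Finset.mem_image.mpr ⟨fun a => ⟨cnt y a, Nat.lt_succ_of_le (cnt_le y a)⟩,
      Finset.mem_univ _, ?_⟩
    funext a
    rw [typeOf_eq_cnt]
  have h1 := Finset.card_le_card hsub
  have h2 := Finset.card_image_le (s := (Finset.univ : Finset (X → Fin (k+1))))
    (f := fun c : X → Fin (k + 1) => (fun a => ((c a : ℕ) : ℝ) / k))
  have h3 : (Finset.univ : Finset (X → Fin (k+1))).card = (k+1) ^ Fintype.card X := by
    simp [Finset.card_univ]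
  have := h1.trans (h2.trans_eq h3)
  calc ((Finset.univ.image fun y : Fin k → X => typeOf y).card : ℝ)
      ≤ (((k+1) ^ Fintype.card X : ℕ) : ℝ) := by exact_mod_cast this
    _ = ((k : ℝ) + 1) ^ Fintype.card X := by push_cast; ring

/-- Key: `∑_y exp(-k Ĥ(y)) ≤ (k+1)^|X|`. -/
lemma sum_exp_neg_entropy_le {k : ℕ} (hk : 1 ≤ k) :
    ∑ y : Fin k → X, Real.exp (-(k : ℝ) * empEntropy y) ≤
      ((k : ℝ) + 1) ^ Fintype.card X := by
  have hgroup : ∑ y : Fin k → X, Real.exp (-(k : ℝ) * empEntropy y) =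
      ∑ q ∈ Finset.univ.image (fun y : Fin k → X => typeOf y),
        ∑ y ∈ Finset.univ.filter fun y : Fin k → X => typeOf y = q,
          Real.exp (-(k : ℝ) * empEntropy y) := by
    rw [Finset.sum_fiberwise_of_maps_to (fun y _ => Finset.mem_image_of_mem _ (Finset.mem_univ y))]
  rw [hgroup]
  have hle : ∀ q ∈ Finset.univ.image (fun y : Fin k → X => typeOf y),
      (∑ y ∈ Finset.univ.filter fun y : Fin k → X => typeOf y = q,
          Real.exp (-(k : ℝ) * empEntropy y)) ≤ 1 := by
    intro q hq
    obtain ⟨y0, _, rfl⟩ := Finset.mem_image.mp hq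
    have heq : ∀ y ∈ Finset.univ.filter fun y : Fin k → X => typeOf y = typeOf y0,
        Real.exp (-(k : ℝ) * empEntropy y) = Real.exp (-(k : ℝ) * empEntropy y0) := by
      intro y hy
      have := (Finset.mem_filter.mp hy).2
      simp only [empEntropy, this]
    rw [Finset.sum_congr rfl heq, Finset.sum_const, nsmul_eq_mul]
    exact fiber_card_le hk y0
  calc (∑ q ∈ Finset.univ.image (fun y : Fin k → X => typeOf y),
        ∑ y ∈ Finset.univ.filter fun y : Fin k → X => typeOf y = q,
          Real.exp (-(k : ℝ) * empEntropy y))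
      ≤ ∑ q ∈ Finset.univ.image (fun y : Fin k → X => typeOf y), 1 := Finset.sum_le_sum hle
    _ = ((Finset.univ.image fun y : Fin k → X => typeOf y).card : ℝ) := by
        rw [Finset.sum_const, nsmul_eq_mul, mul_one]
    _ ≤ ((k : ℝ) + 1) ^ Fintype.card X := card_image_typeOf_le

/-- Count of strings with empirical entropy at most `h`. -/
lemma card_low_entropy_le {k : ℕ} (hk : 1 ≤ k) (h : ℝ) :
    ((Finset.univ.filter fun y' : Fin k → X => empEntropy y' ≤ h).card : ℝ) ≤
      ((k : ℝ) + 1) ^ Fintype.card X * Real.exp ((k : ℝ) * h) := by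
  have h1 : ((Finset.univ.filter fun y' : Fin k → X => empEntropy y' ≤ h).card : ℝ)
      = ∑ y' : Fin k → X, (if empEntropy y' ≤ h then (1:ℝ) else 0) := by
    rw [Finset.sum_ite, Finset.sum_const, Finset.sum_const]
    simp
  rw [h1]
  have h2 : ∀ y' : Fin k → X, (if empEntropy y' ≤ h then (1:ℝ) else 0) ≤
      Real.exp ((k : ℝ) * h) * Real.exp (-(k : ℝ) * empEntropy y') := by
    intro y'
    rw [← Real.exp_add]
    by_cases hc : empEntropy y' ≤ h
    · rw [if_pos hc]
      refine Real.one_le_exp ?_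
      have : (0:ℝ) ≤ (k:ℝ) * (h - empEntropy y') := by
        apply mul_nonneg (by positivity) (by linarith)
      nlinarith
    · rw [if_neg hc]; positivity
  calc (∑ y' : Fin k → X, if empEntropy y' ≤ h then (1:ℝ) else 0)
      ≤ ∑ y' : Fin k → X, Real.exp ((k : ℝ) * h) * Real.exp (-(k : ℝ) * empEntropy y') :=
        Finset.sum_le_sum fun y' _ => h2 y'
    _ = Real.exp ((k : ℝ) * h) * ∑ y' : Fin k → X, Real.exp (-(k : ℝ) * empEntropy y') := by
        rw [Finset.mul_sum]
    _ ≤ Real.exp ((k : ℝ) * h) * (((k : ℝ) + 1) ^ Fintype.card X) := by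
        have := sum_exp_neg_entropy_le (X := X) hk
        have h0 : (0:ℝ) ≤ Real.exp ((k : ℝ) * h) := by positivity
        exact mul_le_mul_of_nonneg_left this h0
    _ = ((k : ℝ) + 1) ^ Fintype.card X * Real.exp ((k : ℝ) * h) := by ring

end MyAux

namespace MyAux
open Finset Real
variable {X : Type*} [Fintype X] [DecidableEq X]
set_option linter.unusedSectionVars false

lemma klDiv_nonneg {q p : X → ℝ} (hq : IsPMF q) (hp : IsPMF p) (habs : AbsCont q p) :
    0 ≤ klDiv q p := by
  have key : ∀ a, q a * Real.log (q a / p a) ≥ q a - p a := by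
    intro a
    by_cases h0 : q a = 0
    · simp [h0]
      linarith [hp.1 a]
    · have hq0 : 0 < q a := lt_of_le_of_ne (hq.1 a) (Ne.symm h0)
      have hp0 : 0 < p a := by
        rcases lt_or_eq_of_le (hp.1 a) with h | h
        · exact h
        · exact absurd (habs a h.symm) h0
      have hpos : 0 < p a / q a := div_pos hp0 hq0
      have hlog := Real.log_le_sub_one_of_pos hpos
      have h1 : Real.log (q a / p a) = - Real.log (p a / q a) := by
        rw [← Real.log_inv]
        congr 1
        field_simp
      rw [h1]
      have h2 : p a / q a - 1 = (p a - q a) / q a := by field_simp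
      rw [h2] at hlog
      have h3 : Real.log (p a / q a) * q a ≤ p a - q a := by
        rw [le_div_iff₀ hq0] at hlog
        linarith [hlog]
      nlinarith
  have hsum : ∑ a, (q a - p a) = 0 := by
    rw [Finset.sum_sub_distrib, hq.2, hp.2]; ring
  have : ∑ a, (q a - p a) ≤ ∑ a, q a * Real.log (q a / p a) :=
    Finset.sum_le_sum fun a _ => key a
  rw [hsum] at this
  exact this

lemma EUN_le {p q : X → ℝ} (hp : IsPMF p) (hq : IsPMF q) (habs : AbsCont q p) (R : ℝ) :
    EUN p R ≤ klDiv q p + max (R - entropy q) 0 := by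
  apply csInf_le
  · refine ⟨0, ?_⟩
    rintro x ⟨q', ⟨hq', habs'⟩, rfl⟩
    have := klDiv_nonneg hq' hp habs'
    have h2 : (0:ℝ) ≤ max (R - entropy q') 0 := le_max_right _ _
    simp only
    linarith
  · exact ⟨q, ⟨hq, habs⟩, rfl⟩

/-- The central source-suffix bound. -/
lemma source_sum_bound {k : ℕ} (hk : 1 ≤ k) {p : X → ℝ} (hp : IsPMF p) (R : ℝ) :
    ∑ y : Fin k → X, (∏ i, p (y i)) * Real.exp (-(k : ℝ) * max (R - empEntropy y) 0) ≤
      ((k : ℝ) + 1) ^ Fintype.card X * Real.exp (-(k : ℝ) * EUN p R) := by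
  have key : ∀ y : Fin k → X,
      (∏ i, p (y i)) * Real.exp (-(k : ℝ) * max (R - empEntropy y) 0) ≤
        Real.exp (-(k : ℝ) * empEntropy y) * Real.exp (-(k : ℝ) * EUN p R) := by
    intro y
    by_cases hz : ∏ i, p (y i) = 0
    · rw [hz, zero_mul]; positivity
    · -- all letters used by y have positive p
      have hpos : ∀ a, cnt y a ≠ 0 → 0 < p a := by
        intro a ha
        rcases lt_or_eq_of_le (hp.1 a) with h | h
        · exact h
        · exfalso
          have : ∃ i, y i = a := by
            by_contra hno
            push_neg at hno
            have : cnt y a = 0 := by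
              unfold cnt
              rw [Finset.card_eq_zero, Finset.filter_eq_empty_iff]
              intro i _
              exact hno i
            exact ha this
          obtain ⟨i, rfl⟩ := this
          exact hz (Finset.prod_eq_zero (Finset.mem_univ i) h.symm)
      set q := typeOf y with hqdef
      have hqpmf : IsPMF q := isPMF_typeOf hk y
      have habs : AbsCont q p := by
        intro a hpa
        by_cases hc : cnt y a = 0
        · rw [hqdef, typeOf_eq_cnt, hc]; simp
        · exact absurd hpa (ne_of_gt (hpos a hc))
      -- product formula
      have hprod : ∏ i, p (y i) = Real.exp ((k : ℝ) * ∑ a, q a * Real.log (p a)) := by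
        rw [prod_comp_cnt, prod_pow_cnt_eq_exp hk y p hpos]
      -- log decomposition
      have hdecomp : ∑ a, q a * Real.log (p a) = -entropy q - klDiv q p := by
        have : ∀ a, q a * Real.log (q a / p a) = q a * Real.log (q a) - q a * Real.log (p a) := by
          intro a
          by_cases h0 : q a = 0
          · simp [h0]
          · have hq0 : 0 < q a := lt_of_le_of_ne (hqpmf.1 a) (Ne.symm h0)
            have hp0 : 0 < p a := by
              rcases lt_or_eq_of_le (hp.1 a) with h | h
              · exact h
              · exact absurd (habs a h.symm) h0
            rw [Real.log_div (ne_of_gt hq0) (ne_of_gt hp0)]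
            ring
        have h2 : klDiv q p = ∑ a, (q a * Real.log (q a) - q a * Real.log (p a)) := by
          unfold klDiv
          exact Finset.sum_congr rfl fun a _ => this a
        rw [Finset.sum_sub_distrib] at h2
        have h3 : entropy q = - ∑ a, q a * Real.log (q a) := rfl
        rw [h3] at *
        linarith [h2]
      have hEUN : EUN p R ≤ klDiv q p + max (R - entropy q) 0 := EUN_le hp hqpmf habs R
      have hemp : empEntropy y = entropy q := rfl
      rw [hprod, ← Real.exp_add]
      rw [← Real.exp_add]
      apply Real.exp_le_exp.mpr
      rw [hdecomp, hemp]
      have hk0 : (0:ℝ) < (k:ℝ) := by positivity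
      nlinarith [hEUN]
  calc ∑ y : Fin k → X, (∏ i, p (y i)) * Real.exp (-(k : ℝ) * max (R - empEntropy y) 0)
      ≤ ∑ y : Fin k → X, Real.exp (-(k : ℝ) * empEntropy y) * Real.exp (-(k : ℝ) * EUN p R) :=
        Finset.sum_le_sum fun y _ => key y
    _ = (∑ y : Fin k → X, Real.exp (-(k : ℝ) * empEntropy y)) * Real.exp (-(k : ℝ) * EUN p R) := by
        rw [Finset.sum_mul]
    _ ≤ ((k : ℝ) + 1) ^ Fintype.card X * Real.exp (-(k : ℝ) * EUN p R) := by
        exact mul_le_mul_of_nonneg_right (sum_exp_neg_entropy_le hk) (by positivity)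

end MyAux

namespace MyAux
open Finset Real
set_option linter.unusedSectionVars false

/-- Counting functions with a forced collision. -/
lemma card_collision {D : Type*} [Fintype D] [DecidableEq D] {m : ℕ} (u v : D) (huv : u ≠ v) :
    Fintype.card {f : D → Fin m // f u = f v} * m = Fintype.card (D → Fin m) := by
  have e : {f : D → Fin m // f u = f v} ≃ ({d : D // d ≠ v} → Fin m) :=
    { toFun := fun f d => f.1 d.1
      invFun := fun g => ⟨fun d => if h : d = v then g ⟨u, huv⟩ else g ⟨d, h⟩, by
        simp [huv]⟩
      left_inv := fun f => by
        apply Subtype.ext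
        funext d
        by_cases h : d = v
        · subst h
          simp [← f.2]
        · simp [h]
      right_inv := fun g => by
        funext d
        simp [d.2] }
  rw [Fintype.card_congr e, Fintype.card_fun, Fintype.card_fun]
  have h1 : Fintype.card {d : D // d ≠ v} = Fintype.card D - 1 := by
    rw [Fintype.card_subtype_compl (p := fun d => d = v), Fintype.card_subtype_eq]
  rw [h1]
  have h2 : 1 ≤ Fintype.card D := Fintype.card_pos_iff.mpr ⟨v⟩
  simp only [Fintype.card_fin]
  rw [← pow_succ]
  congr 1
  omega

/-- Cardinality of `{j : Fin n | c ≤ j}`. -/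
lemma card_filter_ge (n c : ℕ) (hc : c ≤ n) :
    (Finset.univ.filter fun j : Fin n => c ≤ j.val).card = n - c := by
  have : (Finset.univ.filter fun j : Fin n => c ≤ j.val).card =
      (Finset.Ico c n).card := by
    apply Finset.card_bij (fun j _ => j.val)
    · intro j hj
      simp only [Finset.mem_filter, Finset.mem_univ, true_and] at hj
      exact Finset.mem_Ico.mpr ⟨hj, j.isLt⟩
    · intro j₁ _ j₂ _ h
      exact Fin.ext h
    · intro i hi
      rw [Finset.mem_Ico] at hi
      exact ⟨⟨i, hi.2⟩, by simp [hi.1], rfl⟩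
  rw [this, Nat.card_Ico]

/-- The bin-collision probability bound: the number of binning schemes putting `x'`
in the same bin as `x` is at most a `(1/m)^(n+1-l)` fraction. -/
lemma bin_count_le {X : Type*} [Fintype X] [DecidableEq X] {n m l : ℕ} (hm : 1 ≤ m)
    (hl1 : 1 ≤ l) (hln : l ≤ n) (x' x : Fin n → X)
    (hne : x' ⟨l - 1, by omega⟩ ≠ x ⟨l - 1, by omega⟩) :
    ∑ b : BinScheme X n m, (if sameBin b x' x then (1:ℝ) else 0) ≤
      (Fintype.card (BinScheme X n m) : ℝ) * ((1:ℝ)/m) ^ (n + 1 - l) := by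
  classical
  set F := fun j : Fin n => (Fintype.card {f : (Fin (j.val + 1) → X) → Fin m //
      f (pref x' j) = f (pref x j)} : ℝ) with hF
  set G := fun j : Fin n => (Fintype.card ((Fin (j.val + 1) → X) → Fin m) : ℝ) with hG
  have hcard : ∑ b : BinScheme X n m, (if sameBin b x' x then (1:ℝ) else 0) =
      (Fintype.card {b : BinScheme X n m // sameBin b x' x} : ℝ) := by
    rw [Fintype.card_subtype]
    rw [Finset.sum_ite, Finset.sum_const, Finset.sum_const]
    simp
  rw [hcard]
  have hpi : (Fintype.card {b : BinScheme X n m // sameBin b x' x} : ℝ) = ∏ j : Fin n, F j := by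
    have heq := Fintype.card_congr
      ((Equiv.subtypeEquivRight
          (q := fun b : BinScheme X n m => ∀ j : Fin n, b j (pref x' j) = b j (pref x j))
          (fun b => Iff.rfl)).trans
        (Equiv.subtypePiEquivPi (p := fun (j : Fin n) (f : (Fin (j.val+1) → X) → Fin m) =>
          f (pref x' j) = f (pref x j))))
    have heq2 : Fintype.card {b : BinScheme X n m // sameBin b x' x} =
        Fintype.card ((j : Fin n) → {f : (Fin (j.val+1) → X) → Fin m //
          f (pref x' j) = f (pref x j)}) := by
      convert heq using 2
      rfl
    rw [heq2, Fintype.card_pi]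
    push_cast
    rfl
  rw [hpi]
  have hm0 : (0:ℝ) < m := by exact_mod_cast hm
  have hfac : ∀ j : Fin n, F j ≤ G j * (if l - 1 ≤ j.val then (1:ℝ)/m else 1) := by
    intro j
    by_cases hj : l - 1 ≤ j.val
    · rw [if_pos hj]
      have hne' : pref x' j ≠ pref x j := by
        intro hcontra
        apply hne
        have h1 : l - 1 < j.val + 1 := by omega
        have := congrFun hcontra ⟨l - 1, h1⟩
        simpa [pref] using this
      have hcoll := card_collision (m := m) (pref x' j) (pref x j) hne'
      have hr : F j * m = G j := by
        show (Fintype.card {f : (Fin (j.val + 1) → X) → Fin m //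
            f (pref x' j) = f (pref x j)} : ℝ) * m =
          (Fintype.card ((Fin (j.val + 1) → X) → Fin m) : ℝ)
        exact_mod_cast congrArg (Nat.cast (R := ℝ)) hcoll
      rw [mul_one_div, le_div_iff₀ hm0]
      exact le_of_eq hr
    · rw [if_neg hj, mul_one]
      show (Fintype.card {f : (Fin (j.val + 1) → X) → Fin m //
          f (pref x' j) = f (pref x j)} : ℝ) ≤
        (Fintype.card ((Fin (j.val + 1) → X) → Fin m) : ℝ)
      exact_mod_cast Fintype.card_subtype_le _
  have step : ∏ j : Fin n, F j ≤ ∏ j : Fin n, (G j * (if l - 1 ≤ j.val then (1:ℝ)/m else 1)) := by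
    apply Finset.prod_le_prod
    · intro j _
      simp only [hF]
      positivity
    · intro j _
      exact hfac j
  have hsplit : (∏ j : Fin n, (G j * (if l - 1 ≤ j.val then (1:ℝ)/m else 1))) =
      (∏ j : Fin n, G j) * ∏ j : Fin n, (if l - 1 ≤ j.val then (1:ℝ)/m else 1) :=
    Finset.prod_mul_distrib
  have hGprod : (∏ j : Fin n, G j) = (Fintype.card (BinScheme X n m) : ℝ) := by
    simp only [hG]
    rw [Fintype.card_pi]
    push_cast
    rfl
  have hIprod : (∏ j : Fin n, (if l - 1 ≤ j.val then (1:ℝ)/m else 1)) =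
      ((1:ℝ)/m) ^ (n + 1 - l) := by
    rw [Finset.prod_ite, Finset.prod_const, Finset.prod_const, one_pow, mul_one]
    rw [card_filter_ge n (l-1) (by omega)]
    congr 1
    omega
  rw [hsplit, hGprod, hIprod] at step
  exact step

end MyAux

namespace MyAux
open Finset Real
variable {X : Type*} [Fintype X] [DecidableEq X]
set_option linter.unusedSectionVars false

/-- Marginalization: a sum over strings of a function of the suffix. -/
lemma marginalize {p : X → ℝ} (hp : IsPMF p) {n l : ℕ} (hl1 : 1 ≤ l) (hln : l ≤ n)
    (g : (Fin (n + 1 - l) → X) → ℝ) :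
    ∑ x : Fin n → X, (∏ i, p (x i)) * g (substr x l n ⟨hl1, le_rfl⟩) =
      ∑ y : Fin (n + 1 - l) → X, (∏ i, p (y i)) * g y := by
  classical
  have hak : (l - 1) + (n + 1 - l) = n := by omega
  set f : (Fin (l-1) → X) × (Fin (n+1-l) → X) → (Fin n → X) := fun wy =>
    (fun i => if h2 : i.val < l-1 then wy.1 ⟨i.val, h2⟩ else wy.2 ⟨i.val - (l-1), by omega⟩)
    with hf
  have hbij : Function.Bijective f := by
    rw [Function.bijective_iff_has_inverse]
    refine ⟨fun x => (fun i => x ⟨i.val, by omega⟩, fun i => x ⟨(l-1) + i.val, by omega⟩), ?_, ?_⟩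
    · rintro ⟨w, y⟩
      simp only [hf]
      rw [Prod.mk.injEq]
      constructor
      · funext i
        simp [i.isLt]
      · funext i
        have h2 : ¬ ((l-1) + i.val < l-1) := by omega
        simp only [h2, dif_neg, not_false_iff]
        congr 1
        apply Fin.ext
        simp
    · intro x
      funext i
      simp only [hf]
      by_cases h2 : i.val < l-1
      · simp [h2]
      · simp only [h2, dif_neg, not_false_iff]
        congr 1
        apply Fin.ext
        simp
        omega
  have hsuffix : ∀ wy : (Fin (l-1) → X) × (Fin (n+1-l) → X),
      substr (f wy) l n ⟨hl1, le_rfl⟩ = wy.2 := by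
    intro wy
    funext i
    show f wy ⟨l - 1 + i.val, _⟩ = wy.2 i
    simp only [hf]
    have h2 : ¬ (l - 1 + i.val < l-1) := by omega
    rw [dif_neg h2]
    exact congrArg wy.2 (Fin.ext (by
      show l - 1 + i.val - (l-1) = i.val
      omega))
  have hprod : ∀ wy : (Fin (l-1) → X) × (Fin (n+1-l) → X),
      (∏ i, p (f wy i)) = (∏ i, p (wy.1 i)) * (∏ i, p (wy.2 i)) := by
    intro wy
    have h1 : (∏ i : Fin n, p (f wy i)) =
        ∏ i : Fin ((l-1) + (n+1-l)), p (f wy (finCongr hak i)) :=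
      (Equiv.prod_comp (finCongr hak) (fun i => p (f wy i))).symm
    rw [h1, Fin.prod_univ_add]
    congr 1
    · refine Finset.prod_congr rfl fun i _ => ?_
      congr 1
      simp only [hf]
      have h2 : ((finCongr hak) (Fin.castAdd (n+1-l) i)).val = i.val := rfl
      rw [dif_pos (by rw [h2]; exact i.isLt)]
      exact congrArg wy.1 (Fin.ext h2)
    · refine Finset.prod_congr rfl fun i _ => ?_
      congr 1
      simp only [hf]
      have h2 : ((finCongr hak) (Fin.natAdd (l-1) i)).val = (l-1) + i.val := rfl
      have h3 : ¬ (((finCongr hak) (Fin.natAdd (l-1) i)).val < l-1) := by rw [h2]; omega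
      rw [dif_neg h3]
      exact congrArg wy.2 (Fin.ext (by
        show ((finCongr hak) (Fin.natAdd (l-1) i)).val - (l-1) = i.val
        omega))
  rw [← Fintype.sum_bijective f hbij _ _ (fun wy => by rw [hprod wy, hsuffix wy])]
  rw [Fintype.sum_prod_type]
  have hinner : ∀ w : Fin (l-1) → X,
      (∑ y : Fin (n+1-l) → X, ((∏ i, p ((w, y).1 i)) * (∏ i, p ((w, y).2 i))) * g ((w, y).2)) =
      (∏ i, p (w i)) * ∑ y : Fin (n+1-l) → X, (∏ i, p (y i)) * g y := by
    intro w
    simp only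
    rw [Finset.mul_sum]
    exact Finset.sum_congr rfl fun y _ => by ring
  rw [Finset.sum_congr rfl fun w _ => hinner w, ← Finset.sum_mul]
  have hone : (∑ w : Fin (l-1) → X, ∏ i, p (w i)) = 1 := by
    rw [← Fintype.sum_pow p (l-1), hp.2, one_pow]
  rw [hone, one_mul]

end MyAux

namespace MyAux
open Finset Real
set_option linter.unusedSectionVars false

lemma prob_congr {Ω : Type*} [Fintype Ω] (P : Ω → ℝ) {A B : Ω → Prop}
    (h : ∀ ω, A ω ↔ B ω) : prob P A = prob P B := by
  unfold prob
  exact Finset.sum_congr rfl fun ω _ => by rw [if_congr (h ω) rfl rfl]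

lemma prob_le_one {Ω : Type*} [Fintype Ω] (P : Ω → ℝ) (hP : ∀ ω, 0 ≤ P ω)
    (hsum : ∑ ω, P ω = 1) (A : Ω → Prop) : prob P A ≤ 1 := by
  unfold prob
  rw [← hsum]
  refine Finset.sum_le_sum fun ω _ => ?_
  by_cases h : A ω
  · rw [if_pos h]
  · rw [if_neg h]; exact hP ω

lemma prob_nonneg {Ω : Type*} [Fintype Ω] (P : Ω → ℝ) (hP : ∀ ω, 0 ≤ P ω) (A : Ω → Prop) :
    0 ≤ prob P A := by
  unfold prob
  refine Finset.sum_nonneg fun ω _ => ?_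
  by_cases h : A ω
  · rw [if_pos h]; exact hP ω
  · rw [if_neg h]

lemma prob_exists_le {Ω : Type*} [Fintype Ω] (P : Ω → ℝ) (hP : ∀ ω, 0 ≤ P ω)
    (s : Finset ℕ) (A : ℕ → Ω → Prop) :
    prob P (fun ω => ∃ l ∈ s, A l ω) ≤ ∑ l ∈ s, prob P (A l) := by
  unfold prob
  rw [Finset.sum_comm]
  refine Finset.sum_le_sum fun ω _ => ?_
  by_cases h : ∃ l ∈ s, A l ω
  · rw [if_pos h]
    obtain ⟨l0, hl0, hA⟩ := h
    calc P ω = (if A l0 ω then P ω else 0) := by rw [if_pos hA]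
      _ ≤ ∑ l ∈ s, (if A l ω then P ω else 0) := by
          refine Finset.single_le_sum (f := fun l => if A l ω then P ω else 0) (fun l _ => ?_) hl0
          by_cases h' : A l ω
          · rw [if_pos h']; exact hP ω
          · rw [if_neg h']
  · rw [if_neg h]
    refine Finset.sum_nonneg fun l _ => ?_
    by_cases h' : A l ω
    · rw [if_pos h']; exact hP ω
    · rw [if_neg h']

lemma geom_tail_le {E : ℝ} (hE : 0 < E) (Δ n : ℕ) :
    ∑ k ∈ Finset.Icc (Δ+1) n, Real.exp (-(k:ℝ)*E) ≤
      Real.exp (-(Δ:ℝ)*E) * (Real.exp (-E) / (1 - Real.exp (-E))) := by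
  set r := Real.exp (-E) with hr
  have hr0 : 0 < r := Real.exp_pos _
  have hr1 : r < 1 := Real.exp_lt_one_iff.mpr (by linarith)
  have hterm : ∀ k : ℕ, Real.exp (-(k:ℝ)*E) = r ^ k := by
    intro k
    rw [hr, ← Real.exp_nat_mul]
    congr 1
    ring
  rw [Finset.sum_congr rfl fun k _ => hterm k]
  have hpowΔ : Real.exp (-(Δ:ℝ)*E) = r ^ Δ := hterm Δ
  rw [hpowΔ]
  by_cases hn : Δ + 1 ≤ n + 1
  · have : Finset.Icc (Δ+1) n = Finset.Ico (Δ+1) (n+1) := by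
      rw [Finset.Ico_add_one_right_eq_Icc]
    rw [this, geom_sum_Ico (ne_of_lt hr1) hn]
    have h1 : (r ^ (n+1) - r ^ (Δ+1)) / (r - 1) = (r ^ (Δ+1) - r ^ (n+1)) / (1 - r) := by
      rw [div_eq_div_iff (by linarith) (by linarith)]
      ring
    rw [h1]
    have hnum : r ^ (Δ+1) - r ^ (n+1) ≤ r ^ (Δ+1) := by
      nlinarith [pow_nonneg hr0.le (n+1)]
    have h1r : (0:ℝ) < 1 - r := by linarith
    calc (r ^ (Δ+1) - r ^ (n+1)) / (1 - r) ≤ r ^ (Δ+1) / (1 - r) := by gcongr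
      _ = r ^ Δ * (r / (1 - r)) := by rw [pow_succ]; ring
  · have hempty : Finset.Icc (Δ+1) n = ∅ := Finset.Icc_eq_empty (by omega)
    rw [hempty, Finset.sum_empty]
    exact mul_nonneg (by positivity) (div_nonneg hr0.le (by linarith))

lemma poly_le_exp (c : ℕ) {δ : ℝ} (hδ : 0 < δ) :
    ∃ C : ℝ, 0 < C ∧ ∀ k : ℕ, 1 ≤ k → ((k:ℝ)+1)^c ≤ C * Real.exp ((k:ℝ)*δ) := by
  refine ⟨2^c * (Nat.factorial c) / δ^c, by positivity, ?_⟩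
  intro k hk
  have hk1 : (1:ℝ) ≤ (k:ℝ) := by exact_mod_cast hk
  have h1 : ((k:ℝ)+1)^c ≤ (2*(k:ℝ))^c := by
    apply pow_le_pow_left₀ (by linarith)
    linarith
  have h2 : ((k:ℝ)*δ)^c / (Nat.factorial c) ≤ Real.exp ((k:ℝ)*δ) :=
    Real.pow_div_factorial_le_exp (x := (k:ℝ)*δ) (by positivity) c
  have h3 : (2*(k:ℝ))^c = (2^c * (Nat.factorial c) / δ^c) * (((k:ℝ)*δ)^c / (Nat.factorial c)) := by
    have hfac : (0:ℝ) < (Nat.factorial c : ℝ) := by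
      exact_mod_cast Nat.factorial_pos c
    field_simp
    ring
  calc ((k:ℝ)+1)^c ≤ (2*(k:ℝ))^c := h1
    _ = (2^c * (Nat.factorial c) / δ^c) * (((k:ℝ)*δ)^c / (Nat.factorial c)) := h3
    _ ≤ (2^c * (Nat.factorial c) / δ^c) * Real.exp ((k:ℝ)*δ) := by
        apply mul_le_mul_of_nonneg_left h2 (by positivity)

end MyAux

namespace MyAux
open Finset Real
set_option linter.unusedSectionVars false

lemma per_l_bound {X : Type*} [Fintype X] [DecidableEq X] [Nonempty X]
    (p : X → ℝ) (hp : IsPMF p) (m : ℕ) (hm : 2 ≤ m) (R : ℝ) (hR : R = Real.log m)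
    {n l : ℕ} (hl1 : 1 ≤ l) (hln : l ≤ n) :
    prob (fun ω : (Fin n → X) × BinScheme X n m =>
        (∏ i, p (ω.1 i)) / (Fintype.card (BinScheme X n m) : ℝ))
      (fun ω => ∃ x' : Fin n → X, sameBin ω.2 x' ω.1 ∧ divergesAt x' ω.1 l hl1 ∧
        empEntropy (substr x' l n ⟨hl1, le_rfl⟩) ≤ empEntropy (substr ω.1 l n ⟨hl1, le_rfl⟩))
    ≤ (((n+1-l : ℕ):ℝ)+1)^(2 * Fintype.card X) *
        Real.exp (-((n+1-l : ℕ):ℝ) * EUN p R) := by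
  classical
  set k : ℕ := n + 1 - l with hk
  have hk1 : 1 ≤ k := by omega
  set c : ℕ := Fintype.card X with hc
  haveI : Nonempty (BinScheme X n m) := ⟨fun _ _ => ⟨0, by omega⟩⟩
  have hB : (0:ℝ) < (Fintype.card (BinScheme X n m) : ℝ) := by
    exact_mod_cast Fintype.card_pos
  set B : ℝ := (Fintype.card (BinScheme X n m) : ℝ) with hBdef
  -- the event for fixed source string x and binning b
  set Ev : (Fin n → X) → BinScheme X n m → Prop := fun x b =>
    ∃ x' : Fin n → X, sameBin b x' x ∧ divergesAt x' x l hl1 ∧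
      empEntropy (substr x' l n ⟨hl1, le_rfl⟩) ≤ empEntropy (substr x l n ⟨hl1, le_rfl⟩)
    with hEv
  have hsplit : prob (fun ω : (Fin n → X) × BinScheme X n m =>
      (∏ i, p (ω.1 i)) / B) (fun ω => Ev ω.1 ω.2) =
      ∑ x : Fin n → X, ((∏ i, p (x i)) / B) * ∑ b, (if Ev x b then (1:ℝ) else 0) := by
    unfold prob
    rw [Fintype.sum_prod_type]
    refine Finset.sum_congr rfl fun x _ => ?_
    rw [Finset.mul_sum]
    refine Finset.sum_congr rfl fun b _ => ?_
    by_cases h : Ev x b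
    · rw [if_pos h, if_pos h, mul_one]
    · rw [if_neg h, if_neg h, mul_zero]
  -- the candidate set
  set S : (Fin n → X) → Finset (Fin n → X) := fun x =>
    Finset.univ.filter fun x' => divergesAt x' x l hl1 ∧
      empEntropy (substr x' l n ⟨hl1, le_rfl⟩) ≤ empEntropy (substr x l n ⟨hl1, le_rfl⟩)
    with hS
  -- counting bound for fixed x
  have hcount : ∀ x : Fin n → X, (∑ b, (if Ev x b then (1:ℝ) else 0)) ≤
      B * ((((k:ℕ):ℝ)+1)^c * Real.exp (-(k:ℝ) *
        max (R - empEntropy (substr x l n ⟨hl1, le_rfl⟩)) 0)) := by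
    intro x
    set h0 : ℝ := empEntropy (substr x l n ⟨hl1, le_rfl⟩) with hh0
    -- first bound: card of S times collision probability
    have hb1 : (∑ b, (if Ev x b then (1:ℝ) else 0)) ≤
        ((S x).card : ℝ) * (B * ((1:ℝ)/m) ^ k) := by
      have hstep1 : (∑ b, (if Ev x b then (1:ℝ) else 0)) ≤
          ∑ x' ∈ S x, ∑ b : BinScheme X n m, (if sameBin b x' x then (1:ℝ) else 0) := by
        rw [Finset.sum_comm]
        refine Finset.sum_le_sum fun b _ => ?_
        by_cases h : Ev x b
        · rw [if_pos h]
          obtain ⟨x', hsb, hdiv, hemp⟩ := h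
          have hx'S : x' ∈ S x := by
            rw [hS]
            exact Finset.mem_filter.mpr ⟨Finset.mem_univ _, hdiv, hemp⟩
          calc (1:ℝ) = (if sameBin b x' x then (1:ℝ) else 0) := by rw [if_pos hsb]
            _ ≤ ∑ x'' ∈ S x, (if sameBin b x'' x then (1:ℝ) else 0) := by
                refine Finset.single_le_sum
                  (f := fun x'' => if sameBin b x'' x then (1:ℝ) else 0)
                  (fun x'' _ => ?_) hx'S
                split <;> norm_num
        · rw [if_neg h]
          refine Finset.sum_nonneg fun x'' _ => ?_
          split <;> norm_num
      refine hstep1.trans ?_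
      have hone : ∀ x' ∈ S x, (∑ b : BinScheme X n m, (if sameBin b x' x then (1:ℝ) else 0)) ≤
          B * ((1:ℝ)/m) ^ k := by
        intro x' hx'
        rw [hS] at hx'
        obtain ⟨-, hdiv, -⟩ := Finset.mem_filter.mp hx'
        have hne := hdiv.2 hln
        have := bin_count_le (X := X) (n := n) (m := m) (l := l) (by omega) hl1 hln x' x hne
        rw [hk]
        exact this
      calc (∑ x' ∈ S x, ∑ b : BinScheme X n m, (if sameBin b x' x then (1:ℝ) else 0))
          ≤ ∑ x' ∈ S x, B * ((1:ℝ)/m) ^ k := Finset.sum_le_sum hone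
        _ = ((S x).card : ℝ) * (B * ((1:ℝ)/m) ^ k) := by
            rw [Finset.sum_const, nsmul_eq_mul]
    -- second (trivial) bound
    have hb2 : (∑ b, (if Ev x b then (1:ℝ) else 0)) ≤ B := by
      have : (∑ b : BinScheme X n m, (if Ev x b then (1:ℝ) else 0)) ≤
          ∑ b : BinScheme X n m, (1:ℝ) := by
        refine Finset.sum_le_sum fun b _ => ?_
        split <;> norm_num
      refine this.trans ?_
      rw [Finset.sum_const, nsmul_eq_mul, mul_one, Finset.card_univ]
    -- cardinality of S x
    have hcardS : ((S x).card : ℝ) ≤ (((k:ℕ):ℝ)+1)^c * Real.exp ((k:ℝ) * h0) := by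
      have hinj : (S x).card ≤
          (Finset.univ.filter fun y' : Fin k → X => empEntropy y' ≤ h0).card := by
        apply Finset.card_le_card_of_injOn (fun x' => substr x' l n ⟨hl1, le_rfl⟩)
        · intro x' hx'
          rw [hS] at hx'
          obtain ⟨-, -, hemp⟩ := Finset.mem_filter.mp hx'
          exact Finset.mem_filter.mpr ⟨Finset.mem_univ _, hemp⟩
        · intro x1 hx1 x2 hx2 heq
          rw [hS] at hx1 hx2
          simp only [Finset.coe_filter, Set.mem_setOf_eq] at hx1 hx2
          obtain ⟨-, hdiv1, -⟩ := hx1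
          obtain ⟨-, hdiv2, -⟩ := hx2
          have heq' : substr x1 l n ⟨hl1, le_rfl⟩ = substr x2 l n ⟨hl1, le_rfl⟩ := heq
          funext i
          by_cases hi : (i : ℕ) + 1 < l
          · rw [hdiv1.1 i hi, hdiv2.1 i hi]
          · have hi2 : l - 1 ≤ (i : ℕ) := by omega
            have hlt : (i : ℕ) - (l - 1) < n + 1 - l := by omega
            have h1 : x1 i = substr x1 l n ⟨hl1, le_rfl⟩ ⟨(i : ℕ) - (l - 1), hlt⟩ := by
              show x1 i = x1 ⟨l - 1 + ((i : ℕ) - (l - 1)), _⟩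
              congr 1
              apply Fin.ext
              show (i : ℕ) = l - 1 + ((i : ℕ) - (l - 1))
              omega
            have h2 : x2 i = substr x2 l n ⟨hl1, le_rfl⟩ ⟨(i : ℕ) - (l - 1), hlt⟩ := by
              show x2 i = x2 ⟨l - 1 + ((i : ℕ) - (l - 1)), _⟩
              congr 1
              apply Fin.ext
              show (i : ℕ) = l - 1 + ((i : ℕ) - (l - 1))
              omega
            rw [h1, h2, heq']
      calc ((S x).card : ℝ) ≤
          ((Finset.univ.filter fun y' : Fin k → X => empEntropy y' ≤ h0).card : ℝ) := by
            exact_mod_cast hinj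
        _ ≤ (((k:ℕ):ℝ)+1)^c * Real.exp ((k:ℝ) * h0) := card_low_entropy_le hk1 h0
    -- combine with the min trick
    have hmR : ((1:ℝ)/m) ^ k = Real.exp (-(k:ℝ) * R) := by
      have hm0 : (0:ℝ) < m := by positivity
      have h1 : (1:ℝ)/m = Real.exp (-R) := by
        rw [hR, Real.exp_neg, Real.exp_log hm0, one_div]
      rw [h1, ← Real.exp_nat_mul]
      congr 1
      ring
    by_cases hcase : R - h0 ≤ 0
    · -- trivial bound suffices
      have hmax : max (R - h0) 0 = 0 := max_eq_right hcase
      rw [hmax]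
      calc (∑ b, (if Ev x b then (1:ℝ) else 0)) ≤ B := hb2
        _ = B * 1 := by ring
        _ ≤ B * ((((k:ℕ):ℝ)+1)^c * Real.exp (-(k:ℝ) * 0)) := by
            apply mul_le_mul_of_nonneg_left ?_ hB.le
            rw [mul_zero, Real.exp_zero, mul_one]
            apply one_le_pow₀
            have : (1:ℝ) ≤ (k:ℝ) := by exact_mod_cast hk1
            linarith
    · have hmax : max (R - h0) 0 = R - h0 := max_eq_left (by linarith)
      rw [hmax]
      calc (∑ b, (if Ev x b then (1:ℝ) else 0))
          ≤ ((S x).card : ℝ) * (B * ((1:ℝ)/m) ^ k) := hb1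
        _ ≤ ((((k:ℕ):ℝ)+1)^c * Real.exp ((k:ℝ) * h0)) * (B * Real.exp (-(k:ℝ) * R)) := by
            rw [hmR]
            apply mul_le_mul_of_nonneg_right hcardS
            positivity
        _ = B * ((((k:ℕ):ℝ)+1)^c * Real.exp (-(k:ℝ) * (R - h0))) := by
            rw [show -(k:ℝ) * (R - h0) = (k:ℝ)*h0 + (-(k:ℝ)*R) by ring, Real.exp_add]
            ring
  -- put everything together
  have hfinal : prob (fun ω : (Fin n → X) × BinScheme X n m =>
      (∏ i, p (ω.1 i)) / B) (fun ω => Ev ω.1 ω.2) ≤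
      (((k:ℕ):ℝ)+1)^c * ∑ y : Fin k → X, (∏ i, p (y i)) *
        Real.exp (-(k:ℝ) * max (R - empEntropy y) 0) := by
    rw [hsplit]
    have hx : ∀ x : Fin n → X, ((∏ i, p (x i)) / B) * (∑ b, (if Ev x b then (1:ℝ) else 0)) ≤
        (((k:ℕ):ℝ)+1)^c * ((∏ i, p (x i)) *
          Real.exp (-(k:ℝ) * max (R - empEntropy (substr x l n ⟨hl1, le_rfl⟩)) 0)) := by
      intro x
      have hpx : (0:ℝ) ≤ ∏ i, p (x i) := Finset.prod_nonneg fun i _ => hp.1 (x i)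
      calc ((∏ i, p (x i)) / B) * (∑ b, (if Ev x b then (1:ℝ) else 0))
          ≤ ((∏ i, p (x i)) / B) * (B * ((((k:ℕ):ℝ)+1)^c * Real.exp (-(k:ℝ) *
              max (R - empEntropy (substr x l n ⟨hl1, le_rfl⟩)) 0))) := by
            apply mul_le_mul_of_nonneg_left (hcount x) (by positivity)
        _ = (((k:ℕ):ℝ)+1)^c * ((∏ i, p (x i)) *
              Real.exp (-(k:ℝ) * max (R - empEntropy (substr x l n ⟨hl1, le_rfl⟩)) 0)) := by
            field_simp
    calc (∑ x : Fin n → X, ((∏ i, p (x i)) / B) * ∑ b, (if Ev x b then (1:ℝ) else 0))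
        ≤ ∑ x : Fin n → X, (((k:ℕ):ℝ)+1)^c * ((∏ i, p (x i)) *
            Real.exp (-(k:ℝ) * max (R - empEntropy (substr x l n ⟨hl1, le_rfl⟩)) 0)) :=
          Finset.sum_le_sum fun x _ => hx x
      _ = (((k:ℕ):ℝ)+1)^c * ∑ x : Fin n → X, ((∏ i, p (x i)) *
            Real.exp (-(k:ℝ) * max (R - empEntropy (substr x l n ⟨hl1, le_rfl⟩)) 0)) := by
          rw [Finset.mul_sum]
      _ = (((k:ℕ):ℝ)+1)^c * ∑ y : Fin k → X, (∏ i, p (y i)) *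
            Real.exp (-(k:ℝ) * max (R - empEntropy y) 0) := by
          congr 1
          exact marginalize hp hl1 hln
            (fun y => Real.exp (-(k:ℝ) * max (R - empEntropy y) 0))
  refine hfinal.trans ?_
  calc (((k:ℕ):ℝ)+1)^c * ∑ y : Fin k → X, (∏ i, p (y i)) *
        Real.exp (-(k:ℝ) * max (R - empEntropy y) 0)
      ≤ (((k:ℕ):ℝ)+1)^c * ((((k:ℕ):ℝ)+1)^c * Real.exp (-(k:ℝ) * EUN p R)) := by
        apply mul_le_mul_of_nonneg_left (source_sum_bound hk1 hp R) (by positivity)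
    _ = (((k:ℕ):ℝ)+1)^(2*c) * Real.exp (-(k:ℝ) * EUN p R) := by
        rw [two_mul, pow_add]
        ring

end MyAux

/-- Streaming point-to-point coding, universal (minimum suffix-entropy) decoding
(Theorem 3). -/
theorem statement1 {X : Type*} [Fintype X] [DecidableEq X] [Nonempty X]
    (p : X → ℝ) (hp : IsPMF p)
    (m : ℕ) (hm : 2 ≤ m) (R : ℝ) (hR : R = Real.log m) (hRH : entropy p < R)
    (E : ℝ) (hE : E < EUN p R) :
    ∃ K : ℝ, 0 < K ∧
      ∀ n : ℕ, 1 ≤ n → ∀ Δ : ℕ, Δ ≤ n - 1 →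
        prob
          (fun ω : (Fin n → X) × BinScheme X n m =>
            (∏ i, p (ω.1 i)) / (Fintype.card (BinScheme X n m) : ℝ))
          (fun ω => ∃ l : ℕ, ∃ hl1 : 1 ≤ l, ∃ _hl2 : l ≤ n - Δ,
            ∃ x' : Fin n → X,
              sameBin ω.2 x' ω.1 ∧ divergesAt x' ω.1 l hl1 ∧
              empEntropy (substr x' l n ⟨hl1, le_rfl⟩) ≤
                empEntropy (substr ω.1 l n ⟨hl1, le_rfl⟩))
        ≤ K * Real.exp (-(Δ : ℝ) * E) := by
  classical
  have hPnn : ∀ n : ℕ, ∀ ω : (Fin n → X) × BinScheme X n m,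
      0 ≤ (∏ i, p (ω.1 i)) / (Fintype.card (BinScheme X n m) : ℝ) := by
    intro n ω
    have h1 : 0 ≤ ∏ i, p (ω.1 i) := Finset.prod_nonneg fun i _ => hp.1 (ω.1 i)
    positivity
  rcases le_or_gt E 0 with hE0 | hE0
  · -- trivial regime
    refine ⟨1, one_pos, ?_⟩
    intro n hn Δ hΔ
    rw [one_mul]
    haveI : Nonempty (BinScheme X n m) := ⟨fun _ _ => ⟨0, by omega⟩⟩
    have hBpos : (0:ℝ) < (Fintype.card (BinScheme X n m) : ℝ) := by
      exact_mod_cast Fintype.card_pos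
    have hsum : ∑ ω : (Fin n → X) × BinScheme X n m,
        (∏ i, p (ω.1 i)) / (Fintype.card (BinScheme X n m) : ℝ) = 1 := by
      rw [Fintype.sum_prod_type]
      have hinner : ∀ x : Fin n → X,
          (∑ _b : BinScheme X n m,
            (∏ i, p (x i)) / (Fintype.card (BinScheme X n m) : ℝ)) = ∏ i, p (x i) := by
        intro x
        rw [Finset.sum_const, nsmul_eq_mul, Finset.card_univ]
        field_simp
      rw [Finset.sum_congr rfl fun x _ => hinner x]
      rw [← Fintype.sum_pow p n, hp.2, one_pow]
    have h1 := MyAux.prob_le_one _ (hPnn n) hsum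
      (fun ω : (Fin n → X) × BinScheme X n m =>
        ∃ l : ℕ, ∃ hl1 : 1 ≤ l, ∃ _hl2 : l ≤ n - Δ,
          ∃ x' : Fin n → X,
            sameBin ω.2 x' ω.1 ∧ divergesAt x' ω.1 l hl1 ∧
            empEntropy (substr x' l n ⟨hl1, le_rfl⟩) ≤
              empEntropy (substr ω.1 l n ⟨hl1, le_rfl⟩))
    have h2 : (1:ℝ) ≤ Real.exp (-(Δ:ℝ) * E) := by
      apply Real.one_le_exp
      have : (0:ℝ) ≤ (Δ:ℝ) := by positivity
      nlinarith
    linarith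
  · -- exponential regime
    have hδ : 0 < EUN p R - E := by linarith
    obtain ⟨C, hC, hCle⟩ := MyAux.poly_le_exp (2 * Fintype.card X) hδ
    set r : ℝ := Real.exp (-E) with hrdef
    have hr0 : 0 < r := Real.exp_pos _
    have hr1 : r < 1 := Real.exp_lt_one_iff.mpr (by linarith)
    have h1r : (0:ℝ) < 1 - r := by linarith
    refine ⟨C * (r / (1 - r)) + C, by positivity, ?_⟩
    intro n hn Δ hΔ
    set P : (Fin n → X) × BinScheme X n m → ℝ := fun ω =>
      (∏ i, p (ω.1 i)) / (Fintype.card (BinScheme X n m) : ℝ) with hPdef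
    set A : ℕ → (Fin n → X) × BinScheme X n m → Prop := fun l ω =>
      ∃ hl1 : 1 ≤ l, ∃ x' : Fin n → X,
        sameBin ω.2 x' ω.1 ∧ divergesAt x' ω.1 l hl1 ∧
        empEntropy (substr x' l n ⟨hl1, le_rfl⟩) ≤
          empEntropy (substr ω.1 l n ⟨hl1, le_rfl⟩) with hA
    have hiff : ∀ ω : (Fin n → X) × BinScheme X n m,
        (∃ l : ℕ, ∃ hl1 : 1 ≤ l, ∃ _hl2 : l ≤ n - Δ,
          ∃ x' : Fin n → X,
            sameBin ω.2 x' ω.1 ∧ divergesAt x' ω.1 l hl1 ∧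
            empEntropy (substr x' l n ⟨hl1, le_rfl⟩) ≤
              empEntropy (substr ω.1 l n ⟨hl1, le_rfl⟩)) ↔
        (∃ l ∈ Finset.Icc 1 (n - Δ), A l ω) := by
      intro ω
      constructor
      · rintro ⟨l, hl1, hl2, x', hx'⟩
        exact ⟨l, Finset.mem_Icc.mpr ⟨hl1, hl2⟩, hl1, x', hx'⟩
      · rintro ⟨l, hl, hl1, x', hx'⟩
        obtain ⟨h1', h2'⟩ := Finset.mem_Icc.mp hl
        exact ⟨l, h1', h2', x', hx'⟩
    rw [MyAux.prob_congr P hiff]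
    refine (MyAux.prob_exists_le P (hPnn n) _ A).trans ?_
    have hl_bound : ∀ l ∈ Finset.Icc 1 (n - Δ),
        prob P (A l) ≤ C * Real.exp (-((n + 1 - l : ℕ):ℝ) * E) := by
      intro l hl
      obtain ⟨hl1, hl2⟩ := Finset.mem_Icc.mp hl
      have hln : l ≤ n := by omega
      have hAeq : prob P (A l) = prob P (fun ω => ∃ x' : Fin n → X,
          sameBin ω.2 x' ω.1 ∧ divergesAt x' ω.1 l hl1 ∧
          empEntropy (substr x' l n ⟨hl1, le_rfl⟩) ≤
            empEntropy (substr ω.1 l n ⟨hl1, le_rfl⟩)) := by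
        refine MyAux.prob_congr P fun ω => ?_
        constructor
        · rintro ⟨_, hx⟩; exact hx
        · intro hx; exact ⟨hl1, hx⟩
      rw [hAeq]
      refine (MyAux.per_l_bound p hp m hm R hR hl1 hln).trans ?_
      have hk1 : 1 ≤ n + 1 - l := by omega
      have h2 := hCle (n + 1 - l) hk1
      calc (((n + 1 - l : ℕ):ℝ)+1)^(2 * Fintype.card X) *
            Real.exp (-((n + 1 - l : ℕ):ℝ) * EUN p R)
          ≤ (C * Real.exp (((n + 1 - l : ℕ):ℝ) * (EUN p R - E))) *
            Real.exp (-((n + 1 - l : ℕ):ℝ) * EUN p R) := by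
            apply mul_le_mul_of_nonneg_right h2 (by positivity)
        _ = C * Real.exp (-((n + 1 - l : ℕ):ℝ) * E) := by
            rw [mul_assoc, ← Real.exp_add]
            congr 2
            ring
    refine (Finset.sum_le_sum hl_bound).trans ?_
    have hre : (∑ l ∈ Finset.Icc 1 (n - Δ), C * Real.exp (-((n + 1 - l : ℕ):ℝ) * E)) =
        C * ∑ j ∈ Finset.Icc (Δ + 1) n, Real.exp (-(j:ℝ) * E) := by
      rw [← Finset.mul_sum]
      congr 1
      refine Finset.sum_nbij' (i := fun l => n + 1 - l) (j := fun j => n + 1 - j)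
        ?_ ?_ ?_ ?_ ?_
      · intro a ha
        obtain ⟨h1', h2'⟩ := Finset.mem_Icc.mp ha
        simp only [Finset.mem_Icc]
        omega
      · intro a ha
        obtain ⟨h1', h2'⟩ := Finset.mem_Icc.mp ha
        simp only [Finset.mem_Icc]
        omega
      · intro a ha
        obtain ⟨h1', h2'⟩ := Finset.mem_Icc.mp ha
        show n + 1 - (n + 1 - a) = a
        omega
      · intro a ha
        obtain ⟨h1', h2'⟩ := Finset.mem_Icc.mp ha
        show n + 1 - (n + 1 - a) = a
        omega
      · intro a _
        rfl
    rw [hre]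
    have hgeom := MyAux.geom_tail_le hE0 Δ n
    calc C * ∑ j ∈ Finset.Icc (Δ + 1) n, Real.exp (-(j:ℝ) * E)
        ≤ C * (Real.exp (-(Δ:ℝ) * E) * (r / (1 - r))) := by
          apply mul_le_mul_of_nonneg_left hgeom hC.le
      _ = (C * (r / (1 - r))) * Real.exp (-(Δ:ℝ) * E) := by ring
      _ ≤ (C * (r / (1 - r)) + C) * Real.exp (-(Δ:ℝ) * E) := by
          have : (0:ℝ) < Real.exp (-(Δ:ℝ) * E) := Real.exp_pos _
          nlinarith
end
end

section
/- For every n ≥ 1 and every index l with 1 ≤ l ≤ n, the probability that there exists a string x̃ ∈ X^n lying in the same bin as the source string x^n, agreeing with x^n in the first l−1 positions, satisfying x̃_l ≠ x_l and p(x̃) ≥ p(x^n), is at most exp(−(n−l+1)·E_ML(R)). -/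
open Classical
open scoped BigOperators

noncomputable section

open Finset

lemma aux_count {D : Type*} [Fintype D] [DecidableEq D] {m : ℕ}
    {a b : D} (hab : a ≠ b) :
    (∑ g : D → Fin m, if g a = g b then (1:ℝ) else 0) * m
      = Fintype.card (D → Fin m) := by
  classical
  rw [← (Equiv.funSplitAt b (Fin m)).symm.sum_comp (fun g => if g a = g b then (1:ℝ) else 0)]
  rw [Fintype.sum_prod_type]
  have h1 : ∀ (v : Fin m) (h : {j // j ≠ b} → Fin m),
      ((Equiv.funSplitAt b (Fin m)).symm (v, h)) a = h ⟨a, hab⟩ := by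
    intro v h; simp [Equiv.funSplitAt, Equiv.piSplitAt, hab]
  have h2 : ∀ (v : Fin m) (h : {j // j ≠ b} → Fin m),
      ((Equiv.funSplitAt b (Fin m)).symm (v, h)) b = v := by
    intro v h; simp [Equiv.funSplitAt, Equiv.piSplitAt]
  have hD : 1 ≤ Fintype.card D := Fintype.card_pos_iff.mpr ⟨b⟩
  calc (∑ v : Fin m, ∑ h : {j // j ≠ b} → Fin m,
        if ((Equiv.funSplitAt b (Fin m)).symm (v, h)) a
          = ((Equiv.funSplitAt b (Fin m)).symm (v, h)) b then (1:ℝ) else 0) * m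
      = (∑ v : Fin m, ∑ h : {j // j ≠ b} → Fin m, if h ⟨a, hab⟩ = v then (1:ℝ) else 0) * m := by
        congr 1; apply Finset.sum_congr rfl; intro v _; apply Finset.sum_congr rfl; intro h _
        rw [h1, h2]
    _ = (∑ h : {j // j ≠ b} → Fin m, ∑ v : Fin m, if h ⟨a, hab⟩ = v then (1:ℝ) else 0) * m := by
        rw [Finset.sum_comm]
    _ = ((Fintype.card ({j : D // j ≠ b} → Fin m) : ℝ)) * m := by
        simp [Fintype.card_fun]
    _ = Fintype.card (D → Fin m) := by
        have hcs : Fintype.card {j : D // j ≠ b} = Fintype.card D - 1 := by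
          simp [Fintype.card_subtype_compl]
        simp [Fintype.card_fun, hcs]
        rw [← pow_succ, Nat.sub_add_cancel hD]

lemma prod_ite_lt {n k : ℕ} (hk : k ≤ n) (a b : ℝ) :
    (∏ j : Fin n, if (j : ℕ) < k then a else b) = a ^ k * b ^ (n - k) := by
  rw [Fin.prod_univ_eq_prod_range (fun i => if i < k then a else b) n]
  rw [Finset.prod_ite, Finset.prod_const, Finset.prod_const]
  congr 2
  · have : (range n).filter (fun i => i < k) = range k := by
      ext i; simp only [Finset.mem_filter, Finset.mem_range]; omega
    rw [this, Finset.card_range]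
  · have : (range n).filter (fun i => ¬ i < k) = Finset.Ico k n := by
      ext i; simp only [Finset.mem_filter, Finset.mem_range, Finset.mem_Ico]; omega
    rw [this, Nat.card_Ico]

lemma binProb {X : Type*} [Fintype X] [DecidableEq X] {n m : ℕ} (hm : 0 < m)
    (x' x : Fin n → X) (k : ℕ)
    (heq : ∀ j : Fin n, (j : ℕ) < k → pref x' j = pref x j)
    (hne : ∀ j : Fin n, k ≤ (j : ℕ) → pref x' j ≠ pref x j) :
    (∑ b : BinScheme X n m, if sameBin b x' x then (1:ℝ) else 0)
      ≤ (Fintype.card (BinScheme X n m) : ℝ) * ((1:ℝ)/m)^(n-k) := by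
  classical
  have step1 : (∑ b : BinScheme X n m, if sameBin b x' x then (1:ℝ) else 0)
      = ∏ j : Fin n, ∑ g : (Fin (j.val+1) → X) → Fin m,
          (if g (pref x' j) = g (pref x j) then (1:ℝ) else 0) := by
    rw [Finset.prod_univ_sum]
    rw [← Fintype.piFinset_univ]
    apply Finset.sum_congr rfl
    intro b _
    rw [Finset.prod_boole]
    congr 1
    simp [sameBin]
  rw [step1]
  have hfac : ∀ j : Fin n,
      (∑ g : (Fin (j.val+1) → X) → Fin m, if g (pref x' j) = g (pref x j) then (1:ℝ) else 0)
      = (Fintype.card ((Fin (j.val+1) → X) → Fin m) : ℝ)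
          * (if (j:ℕ) < k then 1 else (1:ℝ)/m) := by
    intro j
    by_cases hj : (j:ℕ) < k
    · rw [heq j hj, if_pos hj]
      simp
    · have hc := aux_count (m := m) (hne j (le_of_not_gt hj))
      have hm' : (m:ℝ) ≠ 0 := Nat.cast_ne_zero.mpr hm.ne'
      rw [if_neg hj, mul_one_div, eq_div_iff hm']
      exact hc
  refine le_of_eq ?_
  calc ∏ j : Fin n, (∑ g : (Fin (j.val+1) → X) → Fin m,
          if g (pref x' j) = g (pref x j) then (1:ℝ) else 0)
      = ∏ j : Fin n, ((Fintype.card ((Fin (j.val+1) → X) → Fin m) : ℝ)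
          * (if (j:ℕ) < k then 1 else (1:ℝ)/m)) := by
        exact Finset.prod_congr rfl (fun j _ => hfac j)
    _ = (∏ j : Fin n, (Fintype.card ((Fin (j.val+1) → X) → Fin m) : ℝ))
          * ∏ j : Fin n, (if (j:ℕ) < k then 1 else (1:ℝ)/m) := by
        rw [Finset.prod_mul_distrib]
    _ = (Fintype.card (BinScheme X n m) : ℝ) * ((1:ℝ)/m)^(n-k) := by
        congr 1
        · rw [Fintype.card_pi]; push_cast; rfl
        · by_cases hkn : k ≤ n
          · rw [prod_ite_lt hkn, one_pow, one_mul]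
          · have : ∀ j : Fin n, (j:ℕ) < k := fun j => by omega
            simp only [this, if_true]
            rw [Finset.prod_const, one_pow]
            have : n - k = 0 := by omega
            rw [this, pow_zero]

lemma min_one_le_rpow {t ρ : ℝ} (ht : 0 ≤ t) (h0 : 0 ≤ ρ) (h1 : ρ ≤ 1) :
    min 1 t ≤ t ^ ρ := by
  rcases le_or_gt 1 t with h | h
  · rw [min_eq_left h]
    calc (1:ℝ) = 1 ^ ρ := (Real.one_rpow ρ).symm
      _ ≤ t ^ ρ := Real.rpow_le_rpow zero_le_one h h0
  · rw [min_eq_right h.le]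
    rcases eq_or_lt_of_le ht with h0t | h0t
    · rw [← h0t]
      rcases eq_or_lt_of_le h0 with hρ | hρ
      · rw [← hρ, Real.rpow_zero]; norm_num
      · rw [Real.zero_rpow hρ.ne']
    · calc t = t ^ (1:ℝ) := (Real.rpow_one t).symm
        _ ≤ t ^ ρ := Real.rpow_le_rpow_of_exponent_ge h0t h.le h1

lemma prod_ite_forall {ι : Type*} [Fintype ι] (C : ι → Prop) [DecidablePred C]
    [Decidable (∀ i, C i)] (f : ι → ℝ) :
    (if (∀ i, C i) then ∏ i, f i else 0) = ∏ i, (if C i then f i else 0) := by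
  by_cases h : ∀ i, C i
  · rw [if_pos h]; exact Finset.prod_congr rfl (fun i _ => (if_pos (h i)).symm)
  · rw [if_neg h]; push_neg at h; obtain ⟨i, hi⟩ := h
    symm
    apply Finset.prod_eq_zero (Finset.mem_univ i)
    rw [if_neg hi]

lemma key {X : Type*} [Fintype X] [DecidableEq X] [Nonempty X]
    (p : X → ℝ) (hp : IsPMF p)
    (m : ℕ) (hm : 2 ≤ m)
    (n : ℕ) (l : ℕ) (hl1 : 1 ≤ l) (hl2 : l ≤ n)
    (ρ : ℝ) (hρ0 : 0 ≤ ρ) (hρ1 : ρ ≤ 1) :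
    prob
      (fun ω : (Fin n → X) × BinScheme X n m =>
        (∏ i, p (ω.1 i)) / (Fintype.card (BinScheme X n m) : ℝ))
      (fun ω => ∃ x' : Fin n → X,
        sameBin ω.2 x' ω.1 ∧ divergesAt x' ω.1 l hl1 ∧
        (∏ i, p (ω.1 i)) ≤ (∏ i, p (x' i)))
    ≤ Real.exp (-((n : ℝ) - l + 1) *
        (ρ * Real.log m - (1 + ρ) * Real.log (∑ a, p a ^ (1 / (1 + ρ))))) := by
  classical
  have hm0 : 0 < m := by omega
  have hpnn : ∀ a, 0 ≤ p a := hp.1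
  have hpx0 : ∀ x : Fin n → X, 0 ≤ ∏ i, p (x i) :=
    fun x => Finset.prod_nonneg (fun i _ => hpnn _)
  have h1ρ : (0:ℝ) < 1 + ρ := by linarith
  set s : ℝ := 1 / (1 + ρ) with hs_def
  have hs0 : 0 < s := by positivity
  have hs1 : s * (1 + ρ) = 1 := by rw [hs_def]; field_simp
  set T : ℝ := ∑ a, p a ^ s with hT_def
  have hTnn : ∀ a, (0:ℝ) ≤ p a ^ s := fun a => Real.rpow_nonneg (hpnn a) _
  have hTpos : 0 < T := by
    obtain ⟨a, ha⟩ : ∃ a, 0 < p a := by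
      by_contra h; push_neg at h
      have h2 : ∑ a, p a ≤ 0 := Finset.sum_nonpos (fun a _ => h a)
      rw [hp.2] at h2; linarith
    exact lt_of_lt_of_le (Real.rpow_pos_of_pos ha s)
      (Finset.single_le_sum (fun b _ => hTnn b) (mem_univ a))
  set c : ℕ := n - (l - 1) with hc_def
  have hcast : (c : ℝ) = (n : ℝ) - l + 1 := by
    have h1 : c = n - l + 1 := by omega
    rw [h1, Nat.cast_add, Nat.cast_sub hl2, Nat.cast_one]
  set u : ℝ := ((1:ℝ)/m)^c with hu_def
  have hu0 : 0 < u := by positivity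
  have hcardpos : 0 < Fintype.card (BinScheme X n m) :=
    Fintype.card_pos_iff.mpr ⟨fun _ _ => ⟨0, hm0⟩⟩
  set K : ℝ := (Fintype.card (BinScheme X n m) : ℝ) with hK_def
  have hK0 : 0 < K := by rw [hK_def]; exact_mod_cast hcardpos
  -- abbreviations
  set q : (Fin n → X) → ℝ := fun x => ∑ b : BinScheme X n m,
    if (∃ x' : Fin n → X, sameBin b x' x ∧ divergesAt x' x l hl1 ∧
        (∏ i, p (x i)) ≤ (∏ i, p (x' i))) then (1:ℝ) else 0 with hq_def
  set N : (Fin n → X) → ℝ := fun x => ∑ x' : Fin n → X,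
    if (divergesAt x' x l hl1 ∧ (∏ i, p (x i)) ≤ (∏ i, p (x' i))) then (1:ℝ) else 0
    with hN_def
  have hN0 : ∀ x, 0 ≤ N x := by
    intro x; apply Finset.sum_nonneg; intro x' _; split <;> norm_num
  have hq0 : ∀ x, 0 ≤ q x := by
    intro x; apply Finset.sum_nonneg; intro b _; split <;> norm_num
  have hqcard : ∀ x, q x ≤ K := by
    intro x
    calc q x ≤ ∑ _b : BinScheme X n m, (1:ℝ) := by
          apply Finset.sum_le_sum; intro b _; split <;> norm_num
      _ = K := by simp [hK_def, Finset.card_univ]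
  -- the probability as a sum over x
  have hprob : prob
      (fun ω : (Fin n → X) × BinScheme X n m =>
        (∏ i, p (ω.1 i)) / K)
      (fun ω => ∃ x' : Fin n → X,
        sameBin ω.2 x' ω.1 ∧ divergesAt x' ω.1 l hl1 ∧
        (∏ i, p (ω.1 i)) ≤ (∏ i, p (x' i)))
      = ∑ x : Fin n → X, ((∏ i, p (x i)) / K) * q x := by
    rw [prob, Fintype.sum_prod_type]
    apply Finset.sum_congr rfl
    intro x _
    simp only [hq_def]
    rw [Finset.mul_sum]
    apply Finset.sum_congr rfl
    intro b _
    simp only [mul_ite, mul_one, mul_zero]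
  -- union bound
  have hqN : ∀ x, q x ≤ K * u * N x := by
    intro x
    have step1 : q x ≤ ∑ b : BinScheme X n m, ∑ x' : Fin n → X,
        if (sameBin b x' x ∧ divergesAt x' x l hl1 ∧
            (∏ i, p (x i)) ≤ (∏ i, p (x' i))) then (1:ℝ) else 0 := by
      apply Finset.sum_le_sum
      intro b _
      by_cases hA : ∃ x' : Fin n → X, sameBin b x' x ∧ divergesAt x' x l hl1 ∧
          (∏ i, p (x i)) ≤ (∏ i, p (x' i))
      · obtain ⟨x0, h1, h2, h3⟩ := hA
        rw [if_pos ⟨x0, h1, h2, h3⟩]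
        have hle := Finset.single_le_sum (f := fun x' : Fin n → X =>
            if (sameBin b x' x ∧ divergesAt x' x l hl1 ∧
              (∏ i, p (x i)) ≤ (∏ i, p (x' i))) then (1:ℝ) else 0)
          (fun x' _ => by split <;> norm_num) (mem_univ x0)
        rw [if_pos ⟨h1, h2, h3⟩] at hle
        exact hle
      · rw [if_neg hA]
        apply Finset.sum_nonneg; intro x' _; split <;> norm_num
    rw [Finset.sum_comm] at step1
    have step2 : ∀ x' : Fin n → X,
        (∑ b : BinScheme X n m, if (sameBin b x' x ∧ divergesAt x' x l hl1 ∧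
            (∏ i, p (x i)) ≤ (∏ i, p (x' i))) then (1:ℝ) else 0)
        ≤ (if (divergesAt x' x l hl1 ∧ (∏ i, p (x i)) ≤ (∏ i, p (x' i)))
            then (1:ℝ) else 0) * (K * u) := by
      intro x'
      by_cases hS : divergesAt x' x l hl1 ∧ (∏ i, p (x i)) ≤ (∏ i, p (x' i))
      · rw [if_pos hS, one_mul]
        have heqs : ∀ b : BinScheme X n m,
            (sameBin b x' x ∧ divergesAt x' x l hl1 ∧
              (∏ i, p (x i)) ≤ (∏ i, p (x' i))) ↔ sameBin b x' x := by
          intro b; constructor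
          · exact fun h => h.1
          · exact fun h => ⟨h, hS.1, hS.2⟩
        simp only [heqs]
        have hpre1 : ∀ j : Fin n, (j:ℕ) < l - 1 → pref x' j = pref x j := by
          intro j hj
          funext i
          exact hS.1.1 ⟨i.val, lt_of_le_of_lt (Nat.lt_succ_iff.mp i.isLt) j.isLt⟩
            (by show (i:ℕ) + 1 < l; have := Nat.lt_succ_iff.mp i.isLt; omega)
        have hpre2 : ∀ j : Fin n, l - 1 ≤ (j:ℕ) → pref x' j ≠ pref x j := by
          intro j hj heqp
          apply hS.1.2 hl2
          have hki : l - 1 < j.val + 1 := by omega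
          have := congrFun heqp ⟨l - 1, hki⟩
          exact this
        have := binProb hm0 x' x (l-1) hpre1 hpre2
        rw [hu_def, hc_def, hK_def]
        exact this
      · rw [if_neg hS, zero_mul]
        have : ∀ b : BinScheme X n m,
            ¬ (sameBin b x' x ∧ divergesAt x' x l hl1 ∧
              (∏ i, p (x i)) ≤ (∏ i, p (x' i))) := by
          intro b hcon; exact hS ⟨hcon.2.1, hcon.2.2⟩
        simp only [this, if_false]
        simp
    calc q x ≤ ∑ x' : Fin n → X, ∑ b : BinScheme X n m,
          if (sameBin b x' x ∧ divergesAt x' x l hl1 ∧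
            (∏ i, p (x i)) ≤ (∏ i, p (x' i))) then (1:ℝ) else 0 := step1
      _ ≤ ∑ x' : Fin n → X, (if (divergesAt x' x l hl1 ∧
            (∏ i, p (x i)) ≤ (∏ i, p (x' i))) then (1:ℝ) else 0) * (K * u) :=
          Finset.sum_le_sum (fun x' _ => step2 x')
      _ = N x * (K * u) := by rw [hN_def, ← Finset.sum_mul]
      _ = K * u * N x := by ring
  -- per-x min bound
  have hmin : ∀ x : Fin n → X,
      ((∏ i, p (x i)) / K) * q x ≤ (∏ i, p (x i)) * min 1 (N x * u) := by
    intro x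
    have h1 : q x ≤ K * min 1 (N x * u) := by
      rcases le_total 1 (N x * u) with h | h
      · rw [min_eq_left h, mul_one]; exact hqcard x
      · rw [min_eq_right h]
        calc q x ≤ K * u * N x := hqN x
          _ = K * (N x * u) := by ring
    calc ((∏ i, p (x i)) / K) * q x
        ≤ ((∏ i, p (x i)) / K) * (K * min 1 (N x * u)) := by
          apply mul_le_mul_of_nonneg_left h1 (div_nonneg (hpx0 x) hK0.le)
      _ = (∏ i, p (x i)) * min 1 (N x * u) := by
          field_simp
  -- the heart: per-x Gallager bound
  set g : Fin n → X → ℝ := fun i a =>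
    if (i:ℕ) < l - 1 then p a else p a ^ s * T ^ ρ with hg_def
  have hg0 : ∀ (i : Fin n) (a : X), 0 ≤ g i a := by
    intro i a; rw [hg_def]; dsimp only; split
    · exact hpnn a
    · exact mul_nonneg (hTnn a) (Real.rpow_nonneg hTpos.le _)
  have hheart : ∀ x : Fin n → X,
      (∏ i, p (x i)) * min 1 (N x * u) ≤ u ^ ρ * ∏ i, g i (x i) := by
    intro x
    by_cases hpx : 0 < ∏ i, p (x i)
    · -- positive probability case
      have hpi : ∀ i, 0 < p (x i) := by
        intro i
        rcases (hpnn (x i)).lt_or_eq with h | h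
        · exact h
        · exfalso
          have : (∏ i, p (x i)) = 0 := Finset.prod_eq_zero (mem_univ i) h.symm
          rw [this] at hpx; exact lt_irrefl 0 hpx
      set px : ℝ := ∏ i, p (x i) with hpx_def
      -- D x
      set D : ℝ := ∑ x' : Fin n → X,
        if divergesAt x' x l hl1 then (∏ i, p (x' i)) ^ s else 0 with hD_def
      have hD0 : 0 ≤ D := by
        apply Finset.sum_nonneg; intro x' _; split
        · exact Real.rpow_nonneg (hpx0 x') s
        · exact le_refl 0
      have hpxs_pos0 : 0 < px ^ s := Real.rpow_pos_of_pos hpx s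
      set w : ℝ := px ^ s with hw_def
      have hND : N x ≤ D / w := by
        rw [hw_def, hD_def, Finset.sum_div]
        apply Finset.sum_le_sum
        intro x' _
        by_cases hS : divergesAt x' x l hl1 ∧ px ≤ ∏ i, p (x' i)
        · rw [if_pos hS, if_pos hS.1]
          rw [le_div_iff₀ (Real.rpow_pos_of_pos hpx s), one_mul]
          exact Real.rpow_le_rpow (hpx0 x) hS.2 hs0.le
        · rw [if_neg hS]
          split
          · exact div_nonneg (Real.rpow_nonneg (hpx0 _) s) (Real.rpow_nonneg (hpx0 x) s)
          · simp
      -- factorize D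
      have hDle : D ≤ ∏ i : Fin n, (if (i:ℕ) < l - 1 then p (x i) ^ s else T) := by
        have hCond : ∀ x' : Fin n → X, divergesAt x' x l hl1 ↔
            ∀ i : Fin n, (((i:ℕ) + 1 < l → x' i = x i) ∧ ((i:ℕ) + 1 = l → x' i ≠ x i)) := by
          intro x'
          constructor
          · rintro ⟨h1, h2⟩ i
            refine ⟨h1 i, fun hi => ?_⟩
            have hieq : i = ⟨l - 1, by omega⟩ := Fin.ext (by show (i:ℕ) = l - 1; omega)
            rw [hieq]
            exact h2 hl2
          · intro hC
            refine ⟨fun i hi => (hC i).1 hi, fun h => (hC ⟨l - 1, by omega⟩).2 (by show l - 1 + 1 = l; omega)⟩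
        have hDfac : D = ∏ i : Fin n, ∑ a : X,
            (if (((i:ℕ) + 1 < l → a = x i) ∧ ((i:ℕ) + 1 = l → a ≠ x i))
              then p a ^ s else 0) := by
          rw [hD_def]
          rw [Finset.prod_univ_sum, ← Fintype.piFinset_univ]
          apply Finset.sum_congr rfl
          intro x' _
          calc (if divergesAt x' x l hl1 then (∏ i, p (x' i)) ^ s else 0)
              = (if (∀ i : Fin n, (((i:ℕ) + 1 < l → x' i = x i) ∧ ((i:ℕ) + 1 = l → x' i ≠ x i)))
                  then (∏ i, p (x' i)) ^ s else 0) := if_congr (hCond x') rfl rfl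
            _ = (if (∀ i : Fin n, (((i:ℕ) + 1 < l → x' i = x i) ∧ ((i:ℕ) + 1 = l → x' i ≠ x i)))
                  then ∏ i, (p (x' i)) ^ s else 0) := by
                  rw [← Real.finset_prod_rpow univ _ (fun i _ => hpnn (x' i)) s]
            _ = ∏ i : Fin n, (if (((i:ℕ) + 1 < l → x' i = x i) ∧ ((i:ℕ) + 1 = l → x' i ≠ x i))
                  then (p (x' i)) ^ s else 0) := prod_ite_forall _ _
        rw [hDfac]
        apply Finset.prod_le_prod
        · intro i _
          apply Finset.sum_nonneg; intro a _; split
          · exact hTnn a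
          · exact le_refl 0
        · intro i _
          by_cases hi : (i:ℕ) < l - 1
          · rw [if_pos hi]
            have : ∀ a : X, (((i:ℕ) + 1 < l → a = x i) ∧ ((i:ℕ) + 1 = l → a ≠ x i))
                ↔ a = x i := by
              intro a; constructor
              · intro h; exact h.1 (by omega)
              · intro h; exact ⟨fun _ => h, fun h2 => absurd h2 (by omega)⟩
            simp only [this]
            rw [Finset.sum_ite_eq' univ (x i) (fun a => p a ^ s)]
            simp
          · rw [if_neg hi]
            calc (∑ a : X, if (((i:ℕ) + 1 < l → a = x i) ∧ ((i:ℕ) + 1 = l → a ≠ x i))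
                  then p a ^ s else 0)
                ≤ ∑ a : X, p a ^ s := by
                  apply Finset.sum_le_sum; intro a _; split
                  · exact le_refl _
                  · exact hTnn a
              _ = T := rfl
      -- chain
      set t : Fin n → ℝ := fun i => if (i:ℕ) < l - 1 then p (x i) ^ s else T with ht_def
      have ht0 : ∀ i, 0 ≤ t i := by
        intro i; rw [ht_def]; dsimp only; split
        · exact hTnn _
        · exact hTpos.le
      have hpxs_pos : 0 < w := hpxs_pos0
      have hsplit : px = w * w ^ ρ := by
        rw [hw_def, ← Real.rpow_mul hpx.le, ← Real.rpow_add hpx,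
          show s + s * ρ = s * (1 + ρ) by ring, hs1, Real.rpow_one]
      have hNu0 : 0 ≤ N x * u := mul_nonneg (hN0 x) hu0.le
      calc px * min 1 (N x * u)
          ≤ px * (N x * u) ^ ρ :=
            mul_le_mul_of_nonneg_left (min_one_le_rpow hNu0 hρ0 hρ1) hpx.le
        _ = px * ((N x) ^ ρ * u ^ ρ) := by
            rw [Real.mul_rpow (hN0 x) hu0.le]
        _ ≤ px * ((D / w) ^ ρ * u ^ ρ) := by
            apply mul_le_mul_of_nonneg_left _ hpx.le
            apply mul_le_mul_of_nonneg_right _ (Real.rpow_nonneg hu0.le ρ)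
            exact Real.rpow_le_rpow (hN0 x) hND hρ0
        _ = u ^ ρ * (px * D ^ ρ / w ^ ρ) := by
            rw [Real.div_rpow hD0 hpxs_pos.le]; ring
        _ ≤ u ^ ρ * (px * (∏ i, t i) ^ ρ / w ^ ρ) := by
            apply mul_le_mul_of_nonneg_left _ (Real.rpow_nonneg hu0.le ρ)
            rw [div_eq_mul_inv, div_eq_mul_inv]
            apply mul_le_mul_of_nonneg_right _
              (inv_nonneg.mpr (Real.rpow_nonneg hpxs_pos.le ρ))
            exact mul_le_mul_of_nonneg_left (Real.rpow_le_rpow hD0 hDle hρ0) hpx.le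
        _ = u ^ ρ * (w * ∏ i, (t i) ^ ρ) := by
            congr 1
            rw [← Real.finset_prod_rpow univ t (fun i _ => ht0 i) ρ, hsplit]
            have hwρ : (0:ℝ) < w ^ ρ := Real.rpow_pos_of_pos hpxs_pos ρ
            field_simp
        _ = u ^ ρ * ∏ i, g i (x i) := by
            congr 1
            have hpxs : w = ∏ i, p (x i) ^ s := by
              rw [hw_def]
              exact
              (Real.finset_prod_rpow univ _ (fun i _ => hpnn (x i)) s).symm
            rw [hpxs, ← Finset.prod_mul_distrib]
            apply Finset.prod_congr rfl
            intro i _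
            rw [hg_def, ht_def]; dsimp only
            by_cases hi : (i:ℕ) < l - 1
            · rw [if_pos hi, if_pos hi]
              rw [← Real.rpow_mul (hpnn (x i)), ← Real.rpow_add (hpi i),
                show s + s * ρ = s * (1 + ρ) by ring, hs1, Real.rpow_one]
            · rw [if_neg hi, if_neg hi]
    · -- zero probability case
      have hpx0' : (∏ i, p (x i)) = 0 := le_antisymm (not_lt.mp hpx) (hpx0 x)
      rw [hpx0', zero_mul]
      exact mul_nonneg (Real.rpow_nonneg hu0.le ρ)
        (Finset.prod_nonneg (fun i _ => hg0 i (x i)))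
  -- final assembly
  have hln1 : l - 1 ≤ n := by omega
  rw [hprob]
  calc ∑ x : Fin n → X, ((∏ i, p (x i)) / K) * q x
      ≤ ∑ x : Fin n → X, (∏ i, p (x i)) * min 1 (N x * u) :=
        Finset.sum_le_sum (fun x _ => hmin x)
    _ ≤ ∑ x : Fin n → X, u ^ ρ * ∏ i, g i (x i) :=
        Finset.sum_le_sum (fun x _ => hheart x)
    _ = u ^ ρ * ∑ x : Fin n → X, ∏ i, g i (x i) := by rw [← Finset.mul_sum]
    _ = u ^ ρ * ∏ i : Fin n, ∑ a : X, g i a := by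
        congr 1
        rw [Finset.prod_univ_sum, Fintype.piFinset_univ]
    _ = u ^ ρ * (T ^ ((1:ℝ)+ρ)) ^ c := by
        have hgi : ∀ i : Fin n, (∑ a : X, g i a)
            = if (i:ℕ) < l - 1 then 1 else T ^ ((1:ℝ)+ρ) := by
          intro i
          simp only [hg_def]
          by_cases hi : (i:ℕ) < l - 1
          · simp only [hi, if_true]
            exact hp.2
          · simp only [hi, if_false]
            rw [← Finset.sum_mul, ← hT_def]
            rw [Real.rpow_add hTpos, Real.rpow_one]
        simp only [hgi]
        rw [prod_ite_lt hln1, one_pow, one_mul, hc_def]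
    _ = Real.exp (-((n : ℝ) - l + 1) *
        (ρ * Real.log m - (1 + ρ) * Real.log T)) := by
        have hum : u ^ ρ = Real.exp (-(ρ * ((c:ℝ) * Real.log m))) := by
          rw [Real.rpow_def_of_pos hu0]
          congr 1
          rw [hu_def, Real.log_pow, one_div, Real.log_inv]
          ring
        have hTc : (T ^ ((1:ℝ)+ρ)) ^ c = Real.exp ((c:ℝ) * ((1+ρ) * Real.log T)) := by
          rw [Real.rpow_def_of_pos hTpos, ← Real.exp_nat_mul]
          congr 1
          ring
        rw [hum, hTc, ← Real.exp_add]
        congr 1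
        rw [← hcast]
        ring

/-- Lemma 1: the probability of an ML-misleading string first diverging at position `l`
is at most `exp(−(n−l+1) E_ML(R))`. -/
theorem statement2 {X : Type*} [Fintype X] [DecidableEq X] [Nonempty X]
    (p : X → ℝ) (hp : IsPMF p)
    (m : ℕ) (hm : 2 ≤ m) (R : ℝ) (hR : R = Real.log m)
    (n : ℕ) (hn : 1 ≤ n) (l : ℕ) (hl1 : 1 ≤ l) (hl2 : l ≤ n) :
    prob
      (fun ω : (Fin n → X) × BinScheme X n m =>
        (∏ i, p (ω.1 i)) / (Fintype.card (BinScheme X n m) : ℝ))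
      (fun ω => ∃ x' : Fin n → X,
        sameBin ω.2 x' ω.1 ∧ divergesAt x' ω.1 l hl1 ∧
        (∏ i, p (ω.1 i)) ≤ (∏ i, p (x' i)))
    ≤ Real.exp (-((n : ℝ) - l + 1) * EML p R) := by
  classical
  have hC0 : (0:ℝ) < (n:ℝ) - l + 1 := by
    have h1 : (l:ℝ) ≤ n := Nat.cast_le.mpr hl2
    linarith
  set P : ℝ := prob
      (fun ω : (Fin n → X) × BinScheme X n m =>
        (∏ i, p (ω.1 i)) / (Fintype.card (BinScheme X n m) : ℝ))
      (fun ω => ∃ x' : Fin n → X,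
        sameBin ω.2 x' ω.1 ∧ divergesAt x' ω.1 l hl1 ∧
        (∏ i, p (ω.1 i)) ≤ (∏ i, p (x' i))) with hP_def
  rcases le_or_gt P 0 with hP0 | hP0
  · exact le_trans hP0 (Real.exp_pos _).le
  · have hkey : ∀ ρ ∈ Set.Icc (0:ℝ) 1, P ≤ Real.exp (-((n:ℝ) - l + 1) *
        (ρ * Real.log m - (1 + ρ) * Real.log (∑ a, p a ^ (1 / (1 + ρ))))) := by
      intro ρ hρ
      rw [hP_def]
      exact key p hp m hm n l hl1 hl2 ρ hρ.1 hρ.2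
    have hub : ∀ y ∈ ((fun ρ : ℝ => ρ * R - (1 + ρ) *
        Real.log (∑ x, p x ^ (1 / (1 + ρ)))) '' Set.Icc 0 1),
        y ≤ (- Real.log P) / ((n:ℝ) - l + 1) := by
      rintro y ⟨ρ, hρ, rfl⟩
      have h1 := hkey ρ hρ
      have h2 : Real.log P ≤ -((n:ℝ) - l + 1) *
          (ρ * Real.log m - (1 + ρ) * Real.log (∑ a, p a ^ (1 / (1 + ρ)))) := by
        calc Real.log P ≤ Real.log (Real.exp (-((n:ℝ) - l + 1) *
              (ρ * Real.log m - (1 + ρ) * Real.log (∑ a, p a ^ (1 / (1 + ρ)))))) :=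
            Real.log_le_log hP0 h1
          _ = _ := Real.log_exp _
      rw [le_div_iff₀ hC0, hR]
      nlinarith [h2]
    have hne : ((fun ρ : ℝ => ρ * R - (1 + ρ) *
        Real.log (∑ x, p x ^ (1 / (1 + ρ)))) '' Set.Icc 0 1).Nonempty :=
      (Set.nonempty_Icc.mpr zero_le_one).image _
    have hsup : EML p R ≤ (- Real.log P) / ((n:ℝ) - l + 1) := by
      rw [EML]
      exact csSup_le hne hub
    rw [le_div_iff₀ hC0] at hsup
    calc P = Real.exp (Real.log P) := (Real.exp_log hP0).symm
      _ ≤ Real.exp (-((n:ℝ) - l + 1) * EML p R) := by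
          apply Real.exp_le_exp.mpr
          nlinarith [hsup]
end
end

section
/- For every n ≥ 1 and every index l with 1 ≤ l ≤ n, the probability that there exists a string x̃ ∈ X^n lying in the same bin as the source string x^n, agreeing with x^n in the first l−1 positions, satisfying x̃_l ≠ x_l and Ĥ(x̃_l^n) ≤ Ĥ(x_l^n), is at most (n−l+2)^{2|X|}·exp(−(n−l+1)·E_UN(R)). -/
open Classical
open scoped BigOperators

noncomputable section

namespace S3
open Finset
set_option linter.unusedSectionVars false

variable {X : Type*} [Fintype X] [DecidableEq X]

def cnt {k : ℕ} (w : Fin k → X) (a : X) : ℕ := #(Finset.univ.filter fun i => w i = a)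

lemma typeOf_apply {k : ℕ} (w : Fin k → X) (a : X) : typeOf w a = (cnt w a : ℝ) / k := rfl

lemma sum_cnt {k : ℕ} (w : Fin k → X) : ∑ a, cnt w a = k := by
  have := Finset.card_eq_sum_card_fiberwise (f := w) (s := univ) (t := univ)
    (fun x _ => mem_univ (w x))
  simpa [cnt, Finset.card_univ] using this.symm

lemma cnt_le {k : ℕ} (w : Fin k → X) (a : X) : cnt w a ≤ k := by
  have : cnt w a ≤ #(univ : Finset (Fin k)) := Finset.card_filter_le _ _
  simpa using this

lemma typeOf_nonneg {k : ℕ} (w : Fin k → X) (a : X) : 0 ≤ typeOf w a := by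
  rw [typeOf_apply]; positivity

lemma isPMF_typeOf {k : ℕ} (hk : 0 < k) (w : Fin k → X) : IsPMF (typeOf w) := by
  refine ⟨typeOf_nonneg w, ?_⟩
  have h : ∑ a, typeOf w a = (∑ a, (cnt w a : ℝ)) / k := by
    rw [Finset.sum_div]; rfl
  rw [h, ← Nat.cast_sum, sum_cnt]
  field_simp

lemma cast_cnt {k : ℕ} (hk : 0 < k) (w : Fin k → X) (a : X) :
    (cnt w a : ℝ) = k * typeOf w a := by
  rw [typeOf_apply]
  field_simp

lemma cnt_eq_of_typeOf_eq {k : ℕ} (hk : 0 < k) {w w' : Fin k → X} (h : typeOf w' = typeOf w)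
    (a : X) : cnt w' a = cnt w a := by
  have := congrFun h a
  rw [typeOf_apply, typeOf_apply, div_eq_div_iff (by positivity) (by positivity)] at this
  have hk' : (k : ℝ) ≠ 0 := by positivity
  exact_mod_cast mul_right_cancel₀ hk' this

lemma prod_cnt {k : ℕ} (w : Fin k → X) (f : X → ℝ) :
    ∏ i, f (w i) = ∏ a, f a ^ cnt w a := by
  have h : ∏ i, f (w i) = ∏ a ∈ Finset.univ.image w, f a ^ #(Finset.univ.filter fun i => w i = a) :=
    Finset.prod_comp f w
  simp only [cnt]
  rw [h]
  refine Finset.prod_subset (Finset.subset_univ _) ?_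
  intro a _ ha
  have h0 : #(Finset.univ.filter fun i => w i = a) = 0 := by
    rw [Finset.card_eq_zero, Finset.filter_eq_empty_iff]
    intro i _
    exact fun hw => ha (Finset.mem_image.mpr ⟨i, mem_univ i, hw⟩)
  simp [h0]

lemma pow_eq_exp (N : X → ℕ) (f : X → ℝ) (h : ∀ a, N a ≠ 0 → 0 < f a) :
    ∏ a, f a ^ N a = Real.exp (∑ a, (N a : ℝ) * Real.log (f a)) := by
  rw [Real.exp_sum]
  refine Finset.prod_congr rfl fun a _ => ?_
  by_cases hN : N a = 0
  · simp [hN]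
  · rw [← Real.log_pow, Real.exp_log (pow_pos (h a hN) _)]

lemma cnt_log_typeOf {k : ℕ} (hk : 0 < k) (w : Fin k → X) :
    ∑ a, (cnt w a : ℝ) * Real.log (typeOf w a) = -((k : ℝ) * empEntropy w) := by
  have : ∀ a : X, (cnt w a : ℝ) * Real.log (typeOf w a)
      = (k : ℝ) * (typeOf w a * Real.log (typeOf w a)) := by
    intro a; rw [cast_cnt hk w a]; ring
  rw [Finset.sum_congr rfl fun a _ => this a, ← Finset.mul_sum, empEntropy, entropy]
  ring


lemma sum_prod_pmf {k : ℕ} {p : X → ℝ} (hp : IsPMF p) :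
    ∑ w : Fin k → X, ∏ i, p (w i) = 1 := by
  have h := Finset.prod_univ_sum (fun _ : Fin k => (univ : Finset X)) (fun _ a => p a)
  rw [Fintype.piFinset_univ] at h
  rw [← h]
  simp [hp.2]

lemma prod_typeOf_eq {k : ℕ} (hk : 0 < k) {w w' : Fin k → X} (h : typeOf w' = typeOf w) :
    ∏ i, typeOf w (w' i) = Real.exp (-((k : ℝ) * empEntropy w)) := by
  rw [prod_cnt]
  have hcnt : ∀ a, cnt w' a = cnt w a := cnt_eq_of_typeOf_eq hk h
  have hpos : ∀ a, cnt w' a ≠ 0 → 0 < typeOf w a := by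
    intro a ha
    rw [typeOf_apply]
    have : 0 < cnt w a := by rw [← hcnt a]; omega
    positivity
  rw [pow_eq_exp _ _ hpos]
  congr 1
  rw [Finset.sum_congr rfl fun a _ => by rw [hcnt a]]
  exact cnt_log_typeOf hk w

lemma card_typeClass_le {k : ℕ} (hk : 0 < k) (w : Fin k → X) :
    (#(univ.filter fun w' : Fin k → X => typeOf w' = typeOf w) : ℝ)
      ≤ Real.exp ((k : ℝ) * empEntropy w) := by
  have h1 : ∑ w' ∈ univ.filter (fun w' : Fin k → X => typeOf w' = typeOf w),
      ∏ i, typeOf w (w' i) ≤ 1 := by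
    rw [← sum_prod_pmf (k := k) (isPMF_typeOf hk w)]
    refine Finset.sum_le_sum_of_subset_of_nonneg (Finset.subset_univ _) ?_
    intro w' _ _
    exact Finset.prod_nonneg fun i _ => typeOf_nonneg w (w' i)
  rw [Finset.sum_congr rfl (fun w' hw' => prod_typeOf_eq hk (Finset.mem_filter.mp hw').2),
    Finset.sum_const, nsmul_eq_mul] at h1
  have hE : (0:ℝ) < Real.exp (-((k : ℝ) * empEntropy w)) := Real.exp_pos _
  calc (#(univ.filter fun w' : Fin k → X => typeOf w' = typeOf w) : ℝ)
      = (#(univ.filter fun w' : Fin k → X => typeOf w' = typeOf w) : ℝ)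
        * Real.exp (-((k : ℝ) * empEntropy w)) * Real.exp ((k : ℝ) * empEntropy w) := by
        rw [mul_assoc, ← Real.exp_add]; simp
    _ ≤ 1 * Real.exp ((k : ℝ) * empEntropy w) := by
        apply mul_le_mul_of_nonneg_right h1 (Real.exp_pos _).le
    _ = Real.exp ((k : ℝ) * empEntropy w) := one_mul _

lemma prod_eq_zero_of_not_ac {k : ℕ} {p : X → ℝ} {w : Fin k → X} {a : X}
    (ha : cnt w a ≠ 0) (hpa : p a = 0) : ∏ i, p (w i) = 0 := by
  have : (univ.filter fun i => w i = a).Nonempty :=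
    Finset.card_pos.mp (Nat.pos_of_ne_zero ha)
  obtain ⟨i, hi⟩ := this
  have hwi : w i = a := (Finset.mem_filter.mp hi).2
  exact Finset.prod_eq_zero (mem_univ i) (by rw [hwi, hpa])

lemma sum_typeClass_prob_le {k : ℕ} (hk : 0 < k) {p : X → ℝ} (hp : IsPMF p) (w : Fin k → X)
    (hac : ∀ a, cnt w a ≠ 0 → p a ≠ 0) :
    ∑ w' ∈ univ.filter (fun w' : Fin k → X => typeOf w' = typeOf w), ∏ i, p (w' i)
      ≤ Real.exp (-((k : ℝ) * klDiv (typeOf w) p)) := by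
  have hlog : ∑ a, (cnt w a : ℝ) * Real.log (p a)
      = -((k : ℝ) * klDiv (typeOf w) p) - (k : ℝ) * empEntropy w := by
    have hdiv : ∀ a : X, (cnt w a : ℝ) * Real.log (typeOf w a / p a)
        = (cnt w a : ℝ) * Real.log (typeOf w a) - (cnt w a : ℝ) * Real.log (p a) := by
      intro a
      by_cases hc : cnt w a = 0
      · simp [hc]
      · have ht : typeOf w a ≠ 0 := by
          rw [typeOf_apply]; have : 0 < cnt w a := by omega
          positivity
        rw [Real.log_div ht (hac a hc)]; ring
    have hK : (k : ℝ) * klDiv (typeOf w) p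
        = ∑ a, (cnt w a : ℝ) * Real.log (typeOf w a / p a) := by
      rw [klDiv, Finset.mul_sum]
      refine Finset.sum_congr rfl fun a _ => ?_
      rw [cast_cnt hk w a]; ring
    rw [hK, Finset.sum_congr rfl fun a _ => hdiv a, Finset.sum_sub_distrib,
      cnt_log_typeOf hk w]
    ring
  have hterm : ∀ w' ∈ univ.filter (fun w' : Fin k → X => typeOf w' = typeOf w),
      ∏ i, p (w' i) = Real.exp (-((k : ℝ) * klDiv (typeOf w) p) - (k : ℝ) * empEntropy w) := by
    intro w' hw'
    have h := (Finset.mem_filter.mp hw').2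
    have hcnt : ∀ a, cnt w' a = cnt w a := cnt_eq_of_typeOf_eq hk h
    rw [prod_cnt, pow_eq_exp _ _ (fun a ha => lt_of_le_of_ne (hp.1 a)
      (Ne.symm (hac a (by rw [← hcnt a]; exact ha))))]
    rw [Finset.sum_congr rfl fun a _ => by rw [hcnt a], hlog]
  rw [Finset.sum_congr rfl hterm, Finset.sum_const, nsmul_eq_mul]
  calc (#(univ.filter fun w' : Fin k → X => typeOf w' = typeOf w) : ℝ)
        * Real.exp (-((k : ℝ) * klDiv (typeOf w) p) - (k : ℝ) * empEntropy w)
      ≤ Real.exp ((k : ℝ) * empEntropy w)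
        * Real.exp (-((k : ℝ) * klDiv (typeOf w) p) - (k : ℝ) * empEntropy w) :=
        mul_le_mul_of_nonneg_right (card_typeClass_le hk w) (Real.exp_pos _).le
    _ = Real.exp (-((k : ℝ) * klDiv (typeOf w) p)) := by
        rw [← Real.exp_add]; ring_nf

lemma klDiv_nonneg {p q : X → ℝ} (hq : IsPMF q) (hp : IsPMF p) (hac : AbsCont q p) :
    0 ≤ klDiv q p := by
  have key : ∀ z, q z - p z ≤ q z * Real.log (q z / p z) := by
    intro z
    rcases eq_or_lt_of_le (hq.1 z) with h0 | hq0
    · rw [← h0]; simp; exact hp.1 z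
    · have hp0 : 0 < p z := by
        rcases eq_or_lt_of_le (hp.1 z) with h0' | h; · exact absurd (hac z h0'.symm) (ne_of_gt hq0)
        · exact h
      have hlb := Real.log_le_sub_one_of_pos (div_pos hp0 hq0)
      have hlog : Real.log (q z / p z) = - Real.log (p z / q z) := by
        rw [← Real.log_inv, inv_div]
      rw [hlog]
      have hq' : p z / q z * q z = p z := div_mul_cancel₀ _ (ne_of_gt hq0)
      nlinarith
  have hsum : ∑ z, (q z - p z) ≤ ∑ z, q z * Real.log (q z / p z) :=
    Finset.sum_le_sum fun z _ => key z
  rw [Finset.sum_sub_distrib, hq.2, hp.2] at hsum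
  simpa [klDiv] using hsum

lemma EUN_le {p q : X → ℝ} (hp : IsPMF p) (hq : IsPMF q) (hac : AbsCont q p) (R : ℝ) :
    EUN p R ≤ klDiv q p + max (R - entropy q) 0 := by
  apply csInf_le
  · refine ⟨0, ?_⟩
    rintro x ⟨q', ⟨hq', hac'⟩, rfl⟩
    have := klDiv_nonneg hq' hp hac'
    have h2 : (0:ℝ) ≤ max (R - entropy q') 0 := le_max_right _ _
    simpa using add_le_add this h2
  · exact ⟨q, ⟨hq, hac⟩, rfl⟩

lemma card_image_typeOf_le (k : ℕ) :
    #((univ : Finset (Fin k → X)).image typeOf) ≤ (k + 1) ^ Fintype.card X := by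
  have h1 : (univ : Finset (Fin k → X)).image typeOf
      = ((univ : Finset (Fin k → X)).image (fun w a => cnt w a)).image
          (fun g a => (g a : ℝ) / k) := by
    rw [Finset.image_image]
    rfl
  rw [h1]
  refine le_trans Finset.card_image_le ?_
  refine le_trans (Finset.card_le_card (t := Fintype.piFinset fun _ : X => Finset.range (k+1)) ?_) ?_
  · intro g hg
    obtain ⟨w, _, rfl⟩ := Finset.mem_image.mp hg
    rw [Fintype.mem_piFinset]
    intro a
    rw [Finset.mem_range]
    exact Nat.lt_succ_of_le (cnt_le w a)
  · rw [Fintype.card_piFinset]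
    simp

lemma card_lowEntropy_le {k : ℕ} (hk : 0 < k) (w : Fin k → X) :
    (#(univ.filter fun w' : Fin k → X => empEntropy w' ≤ empEntropy w) : ℝ)
      ≤ ((k : ℝ) + 1) ^ Fintype.card X * Real.exp ((k : ℝ) * empEntropy w) := by
  set s := univ.filter fun w' : Fin k → X => empEntropy w' ≤ empEntropy w with hs
  have hcard : #s = ∑ t ∈ s.image typeOf, #(s.filter fun w' => typeOf w' = t) :=
    Finset.card_eq_sum_card_fiberwise fun x hx => Finset.mem_image_of_mem _ hx
  rw [hcard]
  push_cast
  calc ∑ t ∈ s.image typeOf, (#(s.filter fun w' => typeOf w' = t) : ℝ)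
      ≤ ∑ _t ∈ s.image typeOf, Real.exp ((k : ℝ) * empEntropy w) := by
        refine Finset.sum_le_sum fun t ht => ?_
        obtain ⟨w0, hw0s, rfl⟩ := Finset.mem_image.mp ht
        have hsub : s.filter (fun w' => typeOf w' = typeOf w0)
            ⊆ univ.filter (fun w' => typeOf w' = typeOf w0) :=
          Finset.filter_subset_filter _ (Finset.subset_univ _)
        refine le_trans (Nat.cast_le.mpr (Finset.card_le_card hsub)) ?_
        refine le_trans (card_typeClass_le hk w0) ?_
        apply Real.exp_le_exp.mpr
        have hle : empEntropy w0 ≤ empEntropy w := (Finset.mem_filter.mp hw0s).2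
        have : (0:ℝ) ≤ k := by positivity
        nlinarith
    _ = (#(s.image typeOf) : ℝ) * Real.exp ((k : ℝ) * empEntropy w) := by
        rw [Finset.sum_const, nsmul_eq_mul]
    _ ≤ ((k : ℝ) + 1) ^ Fintype.card X * Real.exp ((k : ℝ) * empEntropy w) := by
        refine mul_le_mul_of_nonneg_right ?_ (Real.exp_pos _).le
        have h2 : #(s.image typeOf) ≤ #((univ : Finset (Fin k → X)).image typeOf) :=
          Finset.card_le_card (Finset.image_subset_image (Finset.subset_univ _))
        have h3 := le_trans h2 (card_image_typeOf_le k)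
        calc (#(s.image typeOf) : ℝ) ≤ ((k+1 : ℕ) : ℝ) ^ Fintype.card X := by
              exact_mod_cast h3
          _ = ((k : ℝ) + 1) ^ Fintype.card X := by push_cast; ring

lemma core_sum_le {k : ℕ} (hk : 0 < k) {p : X → ℝ} (hp : IsPMF p) (R : ℝ) :
    ∑ w : Fin k → X, (∏ i, p (w i)) * Real.exp (-((k : ℝ) * max (R - empEntropy w) 0))
      ≤ ((k : ℝ) + 1) ^ Fintype.card X * Real.exp (-((k : ℝ) * EUN p R)) := by
  rw [← Finset.sum_fiberwise_of_maps_to (g := typeOf)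
    (t := (univ : Finset (Fin k → X)).image typeOf)
    (fun x _ => Finset.mem_image_of_mem _ (mem_univ x)) _]
  calc ∑ t ∈ (univ : Finset (Fin k → X)).image typeOf,
        ∑ w' ∈ univ.filter fun w' : Fin k → X => typeOf w' = t,
          (∏ i, p (w' i)) * Real.exp (-((k : ℝ) * max (R - empEntropy w') 0))
      ≤ ∑ _t ∈ (univ : Finset (Fin k → X)).image typeOf,
          Real.exp (-((k : ℝ) * EUN p R)) := by
        refine Finset.sum_le_sum fun t ht => ?_
        obtain ⟨w0, _, rfl⟩ := Finset.mem_image.mp ht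
        have hent : ∀ w' ∈ univ.filter fun w' : Fin k → X => typeOf w' = typeOf w0,
            (∏ i, p (w' i)) * Real.exp (-((k : ℝ) * max (R - empEntropy w') 0))
            = (∏ i, p (w' i)) * Real.exp (-((k : ℝ) * max (R - empEntropy w0) 0)) := by
          intro w' hw'
          have h := (Finset.mem_filter.mp hw').2
          have : empEntropy w' = empEntropy w0 := by rw [empEntropy, h]; rfl
          rw [this]
        rw [Finset.sum_congr rfl hent, ← Finset.sum_mul]
        by_cases hac : ∀ a, cnt w0 a ≠ 0 → p a ≠ 0
        · have hAC : AbsCont (typeOf w0) p := by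
            intro a hpa
            by_contra ht0
            have hcnt : cnt w0 a ≠ 0 := by
              intro hc; apply ht0; rw [typeOf_apply, hc]; simp
            exact hac a hcnt hpa
          have h1 := sum_typeClass_prob_le hk hp w0 hac
          have h2 := EUN_le hp (isPMF_typeOf hk w0) hAC R
          calc (∑ w' ∈ univ.filter fun w' : Fin k → X => typeOf w' = typeOf w0,
                ∏ i, p (w' i)) * Real.exp (-((k : ℝ) * max (R - empEntropy w0) 0))
              ≤ Real.exp (-((k : ℝ) * klDiv (typeOf w0) p))
                * Real.exp (-((k : ℝ) * max (R - empEntropy w0) 0)) :=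
                mul_le_mul_of_nonneg_right h1 (Real.exp_pos _).le
            _ = Real.exp (-((k : ℝ) * (klDiv (typeOf w0) p + max (R - empEntropy w0) 0))) := by
                rw [← Real.exp_add]; ring_nf
            _ ≤ Real.exp (-((k : ℝ) * EUN p R)) := by
                apply Real.exp_le_exp.mpr
                have hk' : (0:ℝ) ≤ k := by positivity
                have : EUN p R ≤ klDiv (typeOf w0) p + max (R - empEntropy w0) 0 := h2
                nlinarith
        · push_neg at hac
          obtain ⟨a, hcnt, hpa⟩ := hac
          have hz : ∀ w' ∈ univ.filter fun w' : Fin k → X => typeOf w' = typeOf w0,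
              ∏ i, p (w' i) = 0 := by
            intro w' hw'
            have h := (Finset.mem_filter.mp hw').2
            have : cnt w' a ≠ 0 := by rw [cnt_eq_of_typeOf_eq hk h a]; exact hcnt
            exact prod_eq_zero_of_not_ac this hpa
          rw [Finset.sum_congr rfl hz, Finset.sum_const, smul_zero, zero_mul]
          exact (Real.exp_pos _).le
    _ = (#((univ : Finset (Fin k → X)).image typeOf) : ℝ)
          * Real.exp (-((k : ℝ) * EUN p R)) := by
        rw [Finset.sum_const, nsmul_eq_mul]
    _ ≤ ((k : ℝ) + 1) ^ Fintype.card X * Real.exp (-((k : ℝ) * EUN p R)) := by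
        refine mul_le_mul_of_nonneg_right ?_ (Real.exp_pos _).le
        calc (#((univ : Finset (Fin k → X)).image typeOf) : ℝ)
            ≤ ((k+1 : ℕ) : ℝ) ^ Fintype.card X := by exact_mod_cast card_image_typeOf_le k
          _ = ((k : ℝ) + 1) ^ Fintype.card X := by push_cast; ring

lemma pref_ne {n : ℕ} {x x' : Fin n → X} {l : ℕ} {hl1 : 1 ≤ l} (hl2 : l ≤ n)
    (hdiv : divergesAt x' x l hl1) (j : Fin n) (hj : l ≤ j.val + 1) :
    pref x' j ≠ pref x j := by
  intro h
  have hlt : l - 1 < j.val + 1 := by omega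
  have h2 := congrFun h ⟨l - 1, hlt⟩
  simp only [pref] at h2
  exact hdiv.2 hl2 h2

lemma card_sameBin_mul_le {n m : ℕ} (x x' : Fin n → X) {l : ℕ}
    (hl1 : 1 ≤ l) (hl2 : l ≤ n) (hdiv : divergesAt x' x l hl1) :
    #(univ.filter fun b : BinScheme X n m => sameBin b x' x) * m ^ (n + 1 - l)
      ≤ Fintype.card (BinScheme X n m) := by
  classical
  let Φ : {b : BinScheme X n m // sameBin b x' x} × (Fin (n + 1 - l) → Fin m)
      → BinScheme X n m :=
    fun bt j f =>
      if f = pref x' j ∧ l ≤ j.val + 1 then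
        bt.2 ⟨j.val + 1 - l, by have := j.isLt; omega⟩
      else bt.1.1 j f
  have hΦ : Function.Injective Φ := by
    rintro ⟨⟨b1, hb1⟩, t1⟩ ⟨⟨b2, hb2⟩, t2⟩ h
    have ht : t1 = t2 := by
      funext i
      have hjlt : l - 1 + i.val < n := by have := i.isLt; omega
      have h1 := congrFun (congrFun h ⟨l - 1 + i.val, hjlt⟩) (pref x' ⟨l - 1 + i.val, hjlt⟩)
      simp only [Φ] at h1
      have hcc : l ≤ l - 1 + i.val + 1 := by omega
      simp only [true_and] at h1
      rw [if_pos hcc, if_pos hcc] at h1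
      have hval : l - 1 + i.val + 1 - l = i.val := by omega
      simpa only [hval, Fin.eta] using h1
    have hb : b1 = b2 := by
      funext j f
      by_cases hc : f = pref x' j ∧ l ≤ j.val + 1
      · obtain ⟨hf, hjl⟩ := hc
        subst hf
        have hne := pref_ne hl2 hdiv j hjl
        have hcond2 : ¬ (pref x j = pref x' j ∧ l ≤ j.val + 1) := fun hcc => hne hcc.1.symm
        have h2 := congrFun (congrFun h j) (pref x j)
        simp only [Φ] at h2
        rw [if_neg hcond2, if_neg hcond2] at h2
        calc b1 j (pref x' j) = b1 j (pref x j) := hb1 j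
          _ = b2 j (pref x j) := h2
          _ = b2 j (pref x' j) := (hb2 j).symm
      · have h2 := congrFun (congrFun h j) f
        simp only [Φ] at h2
        rw [if_neg hc, if_neg hc] at h2
        exact h2
    simp only [Prod.mk.injEq, Subtype.mk.injEq]
    exact ⟨hb, ht⟩
  have hcard := Fintype.card_le_of_injective Φ hΦ
  rw [Fintype.card_prod, Fintype.card_subtype, Fintype.card_fun, Fintype.card_fin,
    Fintype.card_fin] at hcard
  exact hcard

lemma substr_apply {n : ℕ} (x : Fin n → X) {l : ℕ} (h : 1 ≤ l ∧ n ≤ n)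
    (i : Fin (n + 1 - l)) :
    substr x l n h i = x ⟨l - 1 + i.val, by have := i.isLt; omega⟩ := rfl

lemma card_Sx_le {n : ℕ} (x : Fin n → X) {l : ℕ} (hl1 : 1 ≤ l) (hl2 : l ≤ n) :
    #(univ.filter fun x' : Fin n → X => divergesAt x' x l hl1 ∧
        empEntropy (substr x' l n ⟨hl1, le_rfl⟩) ≤ empEntropy (substr x l n ⟨hl1, le_rfl⟩))
      ≤ #(univ.filter fun w' : Fin (n + 1 - l) → X =>
          empEntropy w' ≤ empEntropy (substr x l n ⟨hl1, le_rfl⟩)) := by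
  classical
  apply Finset.card_le_card_of_injOn (fun x' => substr x' l n ⟨hl1, le_rfl⟩)
  · intro x' hx'
    simp only [Finset.coe_filter, Set.mem_setOf_eq, Finset.mem_coe, Finset.mem_filter, Finset.mem_univ, true_and] at hx' ⊢
    exact hx'.2
  · intro x1 h1 x2 h2 heq
    simp only [Finset.coe_filter, Set.mem_setOf_eq, Finset.mem_univ, true_and] at h1 h2
    funext i
    by_cases hi : (i : ℕ) + 1 < l
    · rw [h1.1.1 i hi, h2.1.1 i hi]
    · have hval : i.val - (l - 1) < n + 1 - l := by have := i.isLt; omega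
      have e1 : x1 i = substr x1 l n ⟨hl1, le_rfl⟩ ⟨i.val - (l - 1), hval⟩ := by
        rw [substr_apply]; congr 1; apply Fin.ext; simp; omega
      have e2 : x2 i = substr x2 l n ⟨hl1, le_rfl⟩ ⟨i.val - (l - 1), hval⟩ := by
        rw [substr_apply]; congr 1; apply Fin.ext; simp; omega
      rw [e1, e2]
      exact congrFun heq _

lemma sum_prefix_suffix {n l : ℕ} (hl1 : 1 ≤ l) (hl2 : l ≤ n) {p : X → ℝ} (hp : IsPMF p)
    (g : (Fin (n + 1 - l) → X) → ℝ) :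
    ∑ x : Fin n → X, (∏ i, p (x i)) * g (substr x l n ⟨hl1, le_rfl⟩)
      = ∑ w : Fin (n + 1 - l) → X, (∏ i, p (w i)) * g w := by
  have hkl : (l - 1) + (n + 1 - l) = n := by omega
  let e1 : Fin (l - 1) ⊕ Fin (n + 1 - l) ≃ Fin n := finSumFinEquiv.trans (finCongr hkl)
  let E : (Fin (l - 1) → X) × (Fin (n + 1 - l) → X) ≃ (Fin n → X) :=
    (Equiv.sumArrowEquivProdArrow _ _ X).symm.trans (Equiv.arrowCongr e1 (Equiv.refl X))
  rw [← Equiv.sum_comp E (fun x => (∏ i, p (x i)) * g (substr x l n ⟨hl1, le_rfl⟩))]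
  have hEapp : ∀ (u : Fin (l - 1) → X) (w : Fin (n + 1 - l) → X) (i : Fin n),
      E (u, w) i = Sum.elim u w (e1.symm i) := fun u w i => rfl
  have hsub : ∀ u w, substr (E (u, w)) l n ⟨hl1, le_rfl⟩ = w := by
    intro u w
    funext i
    rw [substr_apply, hEapp]
    have h3 : e1.symm ⟨l - 1 + i.val, by have := i.isLt; omega⟩ = Sum.inr i := by
      rw [Equiv.symm_apply_eq]
      apply Fin.ext
      simp [e1]
    rw [h3]
    rfl
  have hprod : ∀ u w, (∏ i, p (E (u, w) i)) = (∏ i, p (u i)) * ∏ i, p (w i) := by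
    intro u w
    rw [← Equiv.prod_comp e1 (fun i => p (E (u, w) i))]
    have h4 : ∀ s : Fin (l - 1) ⊕ Fin (n + 1 - l), p (E (u, w) (e1 s)) = p (Sum.elim u w s) := by
      intro s; rw [hEapp, Equiv.symm_apply_apply]
    rw [Finset.prod_congr rfl fun s _ => h4 s]
    exact Fintype.prod_sum_type _
  rw [Fintype.sum_prod_type]
  have h5 : ∀ u w, (∏ i, p (E (u, w) i)) * g (substr (E (u, w)) l n ⟨hl1, le_rfl⟩)
      = (∏ i, p (u i)) * ((∏ i, p (w i)) * g w) := by
    intro u w; rw [hprod, hsub]; ring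
  rw [Finset.sum_congr rfl fun u _ => Finset.sum_congr rfl fun w _ => h5 u w]
  rw [Finset.sum_congr rfl fun u _ => (Finset.mul_sum _ _ _).symm, ← Finset.sum_mul,
    sum_prod_pmf hp, one_mul]

end S3

set_option maxHeartbeats 1000000 in
open S3 Finset in
/-- Lemma 2: with minimum suffix-entropy decoding, the probability of a misleading string
first diverging at position `l` is at most `(n−l+2)^{2|X|} exp(−(n−l+1) E_UN(R))`. -/
theorem statement3 {X : Type*} [Fintype X] [DecidableEq X] [Nonempty X]
    (p : X → ℝ) (hp : IsPMF p)
    (m : ℕ) (hm : 2 ≤ m) (R : ℝ) (hR : R = Real.log m)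
    (n : ℕ) (hn : 1 ≤ n) (l : ℕ) (hl1 : 1 ≤ l) (hl2 : l ≤ n) :
    prob
      (fun ω : (Fin n → X) × BinScheme X n m =>
        (∏ i, p (ω.1 i)) / (Fintype.card (BinScheme X n m) : ℝ))
      (fun ω => ∃ x' : Fin n → X,
        sameBin ω.2 x' ω.1 ∧ divergesAt x' ω.1 l hl1 ∧
        empEntropy (substr x' l n ⟨hl1, le_rfl⟩) ≤
          empEntropy (substr ω.1 l n ⟨hl1, le_rfl⟩))
    ≤ ((n : ℝ) - l + 2) ^ (2 * Fintype.card X) *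
        Real.exp (-((n : ℝ) - l + 1) * EUN p R) := by
  classical
  haveI hmZ : NeZero m := ⟨by omega⟩
  set k := n + 1 - l with hkdef
  have hk : 0 < k := by omega
  set c := Fintype.card X with hc
  set B := Fintype.card (BinScheme X n m) with hB
  have hB0 : 0 < B := Fintype.card_pos
  have hB0' : (0:ℝ) < B := by exact_mod_cast hB0
  have hkc : (k : ℝ) = (n : ℝ) - l + 1 := by
    rw [hkdef, Nat.cast_sub (by omega : l ≤ n + 1)]
    push_cast; ring
  have hpow1 : (1:ℝ) ≤ ((k : ℝ) + 1) ^ c := one_le_pow₀ (by have : (0:ℝ) ≤ (k:ℝ) := Nat.cast_nonneg k; linarith)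
  have hMk : ((m : ℝ)) ^ k = Real.exp ((k : ℝ) * R) := by
    have hm0 : (0:ℝ) < (m:ℝ) := by positivity
    rw [hR, Real.exp_nat_mul, Real.exp_log hm0]
  -- per-x bound
  have main1 : ∀ x : Fin n → X,
      (∑ b : BinScheme X n m,
        if (∃ x' : Fin n → X, sameBin b x' x ∧ divergesAt x' x l hl1 ∧
            empEntropy (substr x' l n ⟨hl1, le_rfl⟩) ≤
              empEntropy (substr x l n ⟨hl1, le_rfl⟩)) then (∏ i, p (x i)) / (B : ℝ) else 0)
      ≤ (∏ i, p (x i)) * (((k : ℝ) + 1) ^ c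
          * Real.exp (-((k : ℝ) * max (R - empEntropy (substr x l n ⟨hl1, le_rfl⟩)) 0))) := by
    intro x
    set Hx := empEntropy (substr x l n ⟨hl1, le_rfl⟩) with hHx
    set A := fun b : BinScheme X n m => ∃ x' : Fin n → X, sameBin b x' x ∧
      divergesAt x' x l hl1 ∧ empEntropy (substr x' l n ⟨hl1, le_rfl⟩) ≤ Hx with hA
    have hstep : (∑ b : BinScheme X n m, if A b then (∏ i, p (x i)) / (B : ℝ) else 0)
        = (#(univ.filter A) : ℝ) * ((∏ i, p (x i)) / (B : ℝ)) := by
      rw [← Finset.sum_filter, Finset.sum_const, nsmul_eq_mul]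
    rw [hstep]
    have hPw : (0:ℝ) ≤ ∏ i, p (x i) := Finset.prod_nonneg fun i _ => hp.1 (x i)
    have hfrac : (#(univ.filter A) : ℝ) / (B : ℝ)
        ≤ ((k : ℝ) + 1) ^ c * Real.exp (-((k : ℝ) * max (R - Hx) 0)) := by
      by_cases hcase : R - Hx ≤ 0
      · rw [max_eq_right hcase]
        have h1 : (#(univ.filter A) : ℝ) / (B : ℝ) ≤ 1 := by
          rw [div_le_one hB0']
          have := Finset.card_filter_le (univ : Finset (BinScheme X n m)) A
          rw [Finset.card_univ] at this
          exact_mod_cast this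
        simpa using le_trans h1 hpow1
      · push_neg at hcase
        rw [max_eq_left hcase.le]
        set Sx := univ.filter fun x' : Fin n → X => divergesAt x' x l hl1 ∧
          empEntropy (substr x' l n ⟨hl1, le_rfl⟩) ≤ Hx with hSx
        have hsubset : univ.filter A ⊆ Sx.biUnion fun x' =>
            univ.filter fun b : BinScheme X n m => sameBin b x' x := by
          intro b hb
          obtain ⟨x', h1, h2, h3⟩ := (Finset.mem_filter.mp hb).2
          exact Finset.mem_biUnion.mpr ⟨x',
            Finset.mem_filter.mpr ⟨Finset.mem_univ _, h2, h3⟩,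
            Finset.mem_filter.mpr ⟨Finset.mem_univ _, h1⟩⟩
        have hunion : #(univ.filter A) * m ^ k ≤ #Sx * B := by
          calc #(univ.filter A) * m ^ k
              ≤ (∑ x' ∈ Sx, #(univ.filter fun b : BinScheme X n m => sameBin b x' x)) * m ^ k := by
                apply Nat.mul_le_mul_right
                exact le_trans (Finset.card_le_card hsubset) (Finset.card_biUnion_le)
            _ = ∑ x' ∈ Sx, #(univ.filter fun b : BinScheme X n m => sameBin b x' x) * m ^ k := by
                rw [Finset.sum_mul]
            _ ≤ ∑ _x' ∈ Sx, B := by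
                refine Finset.sum_le_sum fun x' hx' => ?_
                exact card_sameBin_mul_le x x' hl1 hl2 (Finset.mem_filter.mp hx').2.1
            _ = #Sx * B := by rw [Finset.sum_const, smul_eq_mul]
        have hScard : (#Sx : ℝ) ≤ ((k : ℝ) + 1) ^ c * Real.exp ((k : ℝ) * Hx) := by
          refine le_trans ?_ (card_lowEntropy_le hk (substr x l n ⟨hl1, le_rfl⟩))
          exact_mod_cast card_Sx_le x hl1 hl2
        have hmk0 : (0:ℝ) < (m:ℝ) ^ k := by positivity
        have h4 : (#(univ.filter A) : ℝ) / (B : ℝ) ≤ (#Sx : ℝ) / ((m:ℝ) ^ k) := by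
          rw [div_le_div_iff₀ hB0' hmk0]
          have : ((#(univ.filter A) * m ^ k : ℕ) : ℝ) ≤ ((#Sx * B : ℕ) : ℝ) := by
            exact_mod_cast hunion
          push_cast at this
          linarith
        refine le_trans h4 ?_
        rw [hMk, div_le_iff₀ (Real.exp_pos _)]
        calc (#Sx : ℝ) ≤ ((k : ℝ) + 1) ^ c * Real.exp ((k : ℝ) * Hx) := hScard
          _ = ((k : ℝ) + 1) ^ c * Real.exp (-((k : ℝ) * (R - Hx))) * Real.exp ((k : ℝ) * R) := by
              rw [mul_assoc, ← Real.exp_add]; ring_nf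
    calc (#(univ.filter A) : ℝ) * ((∏ i, p (x i)) / (B : ℝ))
        = (∏ i, p (x i)) * ((#(univ.filter A) : ℝ) / (B : ℝ)) := by ring
      _ ≤ (∏ i, p (x i)) * (((k : ℝ) + 1) ^ c * Real.exp (-((k : ℝ) * max (R - Hx) 0))) :=
          mul_le_mul_of_nonneg_left hfrac hPw
  unfold prob
  rw [Fintype.sum_prod_type]
  simp only
  refine le_trans (Finset.sum_le_sum fun x _ => main1 x) ?_
  calc ∑ x : Fin n → X, (∏ i, p (x i)) * (((k : ℝ) + 1) ^ c
          * Real.exp (-((k : ℝ) * max (R - empEntropy (substr x l n ⟨hl1, le_rfl⟩)) 0)))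
      = ((k : ℝ) + 1) ^ c * ∑ x : Fin n → X, (∏ i, p (x i))
          * Real.exp (-((k : ℝ) * max (R - empEntropy (substr x l n ⟨hl1, le_rfl⟩)) 0)) := by
        rw [Finset.mul_sum]
        exact Finset.sum_congr rfl fun x _ => by ring
    _ = ((k : ℝ) + 1) ^ c * ∑ w : Fin k → X, (∏ i, p (w i))
          * Real.exp (-((k : ℝ) * max (R - empEntropy w) 0)) := by
        rw [sum_prefix_suffix hl1 hl2 hp
          (fun w => Real.exp (-((k : ℝ) * max (R - empEntropy w) 0)))]
    _ ≤ ((k : ℝ) + 1) ^ c * (((k : ℝ) + 1) ^ c * Real.exp (-((k : ℝ) * EUN p R))) :=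
        mul_le_mul_of_nonneg_left (core_sum_le hk hp R) (by positivity)
    _ = ((n : ℝ) - l + 2) ^ (2 * c) * Real.exp (-((n : ℝ) - l + 1) * EUN p R) := by
        have h1 : ((n : ℝ) - l + 2) = (k : ℝ) + 1 := by rw [hkc]; ring
        have h2 : -((n : ℝ) - l + 1) * EUN p R = -((k : ℝ) * EUN p R) := by rw [hkc]; ring
        rw [h1, h2, ← mul_assoc, ← pow_add, two_mul]
end
end
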